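/- arXiv:1504.06005 — 2 statements merged into one kernel-verified Lean document; each statement's English description precedes it below -/
import Mathlib

section
/- For a ∈ A with free cumulants κ_n(a), the cumulant series c_a(z) = Σ_{n≥1} κ_n(a) z^n satisfies 1 + c_a(z) = z·K_a(z), where K_a is the compositional inverse of the Cauchy transform G_a. -/
open scoped Classical
noncomputable section

/-- Formal composition `f ∘ g` of power series (intended for `g` with zero constant
coefficient, in which case this is the usual substitution of `g` into `f`). -/
def pscomp (f g : PowerSeries ℂ) : PowerSeries ℂ :=
  PowerSeries.mk fun n => ∑ k ∈ Finset.range (n + 1),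
    (PowerSeries.coeff k f) * PowerSeries.coeff n (g ^ k)

/-- The series `Σ_{n ≥ 1} f n · zⁿ` associated to a sequence `f`. -/
def phiSeries (f : ℕ → ℂ) : PowerSeries ℂ :=
  PowerSeries.mk fun n => if n = 0 then 0 else f n

/-- A setoid (partition) is non-crossing with respect to a position key `k`:
there is no crossing `k a < k b < k c < k d` with `a ∼ c`, `b ∼ d`, `a ≁ b`. -/
def NonCrossingOn {α : Type*} (k : α → ℤ) (s : Setoid α) : Prop :=
  ∀ a b c d : α, k a < k b → k b < k c → k c < k d → s.r a c → s.r b d → s.r a b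

/-- Non-crossing partitions of `{1, …, n}` in the usual order. -/
def IsNC {n : ℕ} (s : Setoid (Fin n)) : Prop :=
  NonCrossingOn (fun i => (i.val : ℤ)) s

def half {n : ℕ} (x : Fin (2 * n)) : Fin n := ⟨x.val / 2, by omega⟩

/-- The interleaved partition on `{1, 1', 2, 2', …, n, n'}`: even positions are the
unprimed points, carrying `p`; odd positions are the primed points, carrying `t`. -/
def interleave {n : ℕ} (p t : Setoid (Fin n)) : Setoid (Fin (2 * n)) where
  r x y := x.val % 2 = y.val % 2 ∧ (x.val % 2 = 0 → p.r (half x) (half y)) ∧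
    (x.val % 2 = 1 → t.r (half x) (half y))
  iseqv := by
    refine ⟨fun x => ⟨rfl, fun _ => p.iseqv.refl _, fun _ => t.iseqv.refl _⟩, ?_, ?_⟩
    · rintro x y ⟨h1, h2, h3⟩
      exact ⟨h1.symm, fun h0 => p.iseqv.symm (h2 (h1.trans h0)),
        fun h0 => t.iseqv.symm (h3 (h1.trans h0))⟩
    · rintro x y z ⟨h1, h2, h3⟩ ⟨h1', h2', h3'⟩
      exact ⟨h1.trans h1', fun h0 => p.iseqv.trans (h2 h0) (h2' (h1.symm.trans h0)),
        fun h0 => t.iseqv.trans (h3 h0) (h3' (h1.symm.trans h0))⟩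

/-- The Kreweras complement of `p ∈ NC(n)`: the largest partition `t` of the primed
points such that the interleaving of `p` and `t` is non-crossing on `{1,1',…,n,n'}`. -/
def kreweras {n : ℕ} (p : Setoid (Fin n)) : Setoid (Fin n) :=
  sSup {t | IsNC (interleave p t)}

/-- The blocks of a partition, as a finset of finsets. -/
def blocksOf {n : ℕ} (s : Setoid (Fin n)) : Finset (Finset (Fin n)) :=
  Finset.univ.image fun i => Finset.univ.filter fun j => s.r i j

/-- The value `f(0_n, π) = ∏_{V block of π} f(0_{|V|}, 1_{|V|})` of the multiplicative
function determined by the sequence `f n = f(0_n, 1_n)`. -/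
def fval {n : ℕ} (f : ℕ → ℂ) (s : Setoid (Fin n)) : ℂ :=
  ∏ B ∈ blocksOf s, f B.card

instance setoidFintype (n : ℕ) : Fintype (Setoid (Fin n)) :=
  Fintype.ofInjective (fun s => fun a b : Fin n => decide (s.r a b)) (by
    intro s t h
    apply Setoid.ext
    intro a b
    have := congrFun (congrFun h a) b
    simpa [decide_eq_decide] using this)

/-- Restriction of a partition to a block `B`, relabelled along the order
isomorphism `Fin B.card ≃o B`. -/
def restrictS {n : ℕ} (s : Setoid (Fin n)) (B : Finset (Fin n)) : Setoid (Fin B.card) :=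
  Setoid.comap (fun j => (B.orderIsoOfFin rfl j).val) s

/-- The value on the interval `[ρ, σ]` of the (canonical multiplicative extension of
the) multiplicative function determined by the sequence `f`, via the canonical
decomposition `[ρ, σ] ≅ ∏_{B block of σ} [ρ|_B, 1_B]` and
`f(τ, 1_m) = ∏_{C block of K(τ)} f(0_{|C|}, 1_{|C|})`. -/
def intervalVal {n : ℕ} (f : ℕ → ℂ) (ρ σ : Setoid (Fin n)) : ℂ :=
  ∏ B ∈ blocksOf σ, fval f (kreweras (restrictS ρ B))

-- chunk 1
def minRep {n : ℕ} (s : Setoid (Fin n)) (i : Fin n) : Prop := ∀ j, s.r i j → i ≤ j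
def cls {n : ℕ} (s : Setoid (Fin n)) (i : Fin n) : Finset (Fin n) :=
  Finset.univ.filter fun j => s.r i j
def wjElt (κ : ℕ → ℂ) (j : ℕ) {n : ℕ} (s : Setoid (Fin n)) (i : Fin n) : ℂ :=
  if minRep s i then κ ((cls s i).card + if i.val = 0 then j else 0) else 1
def wjv (κ : ℕ → ℂ) (j : ℕ) {n : ℕ} (s : Setoid (Fin n)) : ℂ :=
  (if n = 0 then κ j else 1) * ∏ i, wjElt κ j s i
def Msum (κ : ℕ → ℂ) (n : ℕ) : ℂ := ∑ π : {s : Setoid (Fin n) // IsNC s}, fval κ π.1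
def Asum (κ : ℕ → ℂ) (j n : ℕ) : ℂ := ∑ π : {s : Setoid (Fin n) // IsNC s}, wjv κ j π.1

lemma cls_eq_of_rel {n : ℕ} (s : Setoid (Fin n)) {i j : Fin n} (h : s.r i j) :
    cls s i = cls s j := by
  ext k; simp only [cls, Finset.mem_filter, Finset.mem_univ, true_and]
  exact ⟨fun hk => s.iseqv.trans (s.iseqv.symm h) hk, fun hk => s.iseqv.trans h hk⟩

lemma mem_cls {n : ℕ} {s : Setoid (Fin n)} {i j : Fin n} : j ∈ cls s i ↔ s.r i j := by
  simp [cls]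

lemma blocksOf_eq_image {n : ℕ} (s : Setoid (Fin n)) :
    blocksOf s = (Finset.univ.filter (minRep s)).image (cls s) := by
  apply Finset.Subset.antisymm
  · intro B hB
    simp only [blocksOf, Finset.mem_image, Finset.mem_univ, true_and] at hB
    obtain ⟨i, rfl⟩ := hB
    have hne : (cls s i).Nonempty := ⟨i, mem_cls.2 (s.iseqv.refl i)⟩
    set i₀ := (cls s i).min' hne with hi₀
    have hmem : i₀ ∈ cls s i := (cls s i).min'_mem hne
    have hri : s.r i i₀ := mem_cls.1 hmem
    have hc : cls s i₀ = cls s i := (cls_eq_of_rel s hri).symm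
    refine Finset.mem_image.2 ⟨i₀, Finset.mem_filter.2 ⟨Finset.mem_univ _, ?_⟩, by
      rw [hc]; rfl⟩
    intro j hj
    have : j ∈ cls s i := by rw [← hc]; exact mem_cls.2 hj
    exact (cls s i).min'_le j this
  · intro B hB
    simp only [Finset.mem_image, Finset.mem_filter, Finset.mem_univ, true_and] at hB
    obtain ⟨i, _, rfl⟩ := hB
    exact Finset.mem_image.2 ⟨i, Finset.mem_univ _, rfl⟩

lemma fval_eq_prod {n : ℕ} (κ : ℕ → ℂ) (s : Setoid (Fin n)) :
    fval κ s = ∏ i : Fin n, (if minRep s i then κ (cls s i).card else 1) := by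
  rw [fval, blocksOf_eq_image, Finset.prod_image, ← Finset.prod_filter]
  intro i hi j hj hij
  simp only [Finset.mem_coe, Finset.mem_filter, Finset.mem_univ, true_and] at hi hj
  have h1 : j ∈ cls s i := by rw [hij]; exact mem_cls.2 (s.iseqv.refl j)
  have h2 : i ∈ cls s j := by rw [← hij]; exact mem_cls.2 (s.iseqv.refl i)
  exact le_antisymm (hi j (mem_cls.1 h1)) (hj i (mem_cls.1 h2))

lemma wjv_zero_eq_fval {n : ℕ} (hn : n ≠ 0) (κ : ℕ → ℂ) (s : Setoid (Fin n)) :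
    wjv κ 0 s = fval κ s := by
  rw [wjv, if_neg hn, one_mul, fval_eq_prod]
  refine Finset.prod_congr rfl fun i _ => ?_
  simp [wjElt]

lemma setoid0_unique : ∀ s t : Setoid (Fin 0), s = t := by
  intro s t; apply Setoid.ext; intro a; exact a.elim0

lemma Asum_zero (κ : ℕ → ℂ) (j : ℕ) : Asum κ j 0 = κ j := by
  rw [Asum]
  have h1 : ∀ π : {s : Setoid (Fin 0) // IsNC s}, wjv κ j π.1 = κ j := by
    intro π; rw [wjv, if_pos rfl]; simp
  rw [Finset.sum_congr rfl (fun π _ => h1 π), Finset.sum_const]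
  have : Fintype.card {s : Setoid (Fin 0) // IsNC s} = 1 := by
    rw [Fintype.card_eq_one_iff]
    refine ⟨⟨⊥, fun a => a.elim0⟩, fun y => ?_⟩
    exact Subtype.ext (setoid0_unique _ _)
  simp [Finset.card_univ, this]

lemma Msum_eq_Asum {n : ℕ} (hn : n ≠ 0) (κ : ℕ → ℂ) : Msum κ n = Asum κ 0 n := by
  rw [Msum, Asum]
  exact Finset.sum_congr rfl fun π _ => (wjv_zero_eq_fval hn κ π.1).symm

section Join
variable {g m : ℕ}

def R1 {g : ℕ} (π₁ : Setoid (Fin g)) (p q : ℕ) : Prop :=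
  ∃ (hp : p < g) (hq : q < g), π₁.r ⟨p, hp⟩ ⟨q, hq⟩

lemma R1.symm {π₁ : Setoid (Fin g)} {p q : ℕ} (h : R1 π₁ p q) : R1 π₁ q p := by
  obtain ⟨hp, hq, h⟩ := h; exact ⟨hq, hp, π₁.iseqv.symm h⟩

lemma R1.trans {π₁ : Setoid (Fin g)} {p q r : ℕ} (h : R1 π₁ p q) (h' : R1 π₁ q r) :
    R1 π₁ p r := by
  obtain ⟨hp, hq, h⟩ := h; obtain ⟨hq', hr, h'⟩ := h'
  exact ⟨hp, hr, π₁.iseqv.trans h h'⟩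

lemma R1.refl {π₁ : Setoid (Fin g)} {p : ℕ} (hp : p < g) : R1 π₁ p p :=
  ⟨hp, hp, π₁.iseqv.refl _⟩

def joinRel (π₁ : Setoid (Fin g)) (π₂ : Setoid (Fin m)) (x y : Fin (g+m+1)) : Prop :=
  x.val = y.val ∨
  (1 ≤ x.val ∧ x.val ≤ g ∧ 1 ≤ y.val ∧ y.val ≤ g ∧ R1 π₁ (x.val-1) (y.val-1)) ∨
  ((x.val = 0 ∨ g+1 ≤ x.val) ∧ (y.val = 0 ∨ g+1 ≤ y.val) ∧ R1 π₂ (x.val-1-g) (y.val-1-g))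

def join (π₁ : Setoid (Fin g)) (π₂ : Setoid (Fin m)) : Setoid (Fin (g+m+1)) where
  r := joinRel π₁ π₂
  iseqv := by
    refine ⟨fun x => Or.inl rfl, ?_, ?_⟩
    · rintro x y (h | ⟨h1,h2,h3,h4,h5⟩ | ⟨h1,h2,h3⟩)
      · exact Or.inl h.symm
      · exact Or.inr (Or.inl ⟨h3,h4,h1,h2,h5.symm⟩)
      · exact Or.inr (Or.inr ⟨h2,h1,h3.symm⟩)
    · rintro x y z (h | ⟨h1,h2,h3,h4,h5⟩ | ⟨h1,h2,h3⟩) h'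
      · cases Fin.ext h; exact h'
      · rcases h' with h' | ⟨g1,g2,g3,g4,g5⟩ | ⟨g1,g2,g3⟩
        · cases Fin.ext h'.symm; exact Or.inr (Or.inl ⟨h1,h2,h3,h4,h5⟩)
        · exact Or.inr (Or.inl ⟨h1,h2,g3,g4,h5.trans g5⟩)
        · omega
      · rcases h' with h' | ⟨g1,g2,g3,g4,g5⟩ | ⟨g1,g2,g3⟩
        · cases Fin.ext h'.symm; exact Or.inr (Or.inr ⟨h1,h2,h3⟩)
        · omega
        · exact Or.inr (Or.inr ⟨h1,g2,h3.trans g3⟩)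

lemma join_r {π₁ : Setoid (Fin g)} {π₂ : Setoid (Fin m)} {x y : Fin (g+m+1)} :
    (join π₁ π₂).r x y ↔ joinRel π₁ π₂ x y := Iff.rfl

lemma joinRel_gap_iff {π₁ : Setoid (Fin g)} {π₂ : Setoid (Fin m)} {x y : Fin (g+m+1)}
    (hx : 1 ≤ x.val ∧ x.val ≤ g) :
    joinRel π₁ π₂ x y ↔ (1 ≤ y.val ∧ y.val ≤ g ∧ R1 π₁ (x.val-1) (y.val-1)) := by
  constructor
  · rintro (h | ⟨h1,h2,h3,h4,h5⟩ | ⟨h1,h2,h3⟩)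
    · exact ⟨by omega, by omega, by rw [h]; exact R1.refl (by omega)⟩
    · exact ⟨h3, h4, h5⟩
    · omega
  · rintro ⟨h1, h2, h3⟩
    exact Or.inr (Or.inl ⟨hx.1, hx.2, h1, h2, h3⟩)

lemma joinRel_tl_iff {π₁ : Setoid (Fin g)} {π₂ : Setoid (Fin m)} {x y : Fin (g+m+1)}
    (hx : x.val = 0 ∨ g+1 ≤ x.val) :
    joinRel π₁ π₂ x y ↔
      (x.val = y.val ∨ ((y.val = 0 ∨ g+1 ≤ y.val) ∧ R1 π₂ (x.val-1-g) (y.val-1-g))) := by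
  constructor
  · rintro (h | ⟨h1,h2,h3,h4,h5⟩ | ⟨h1,h2,h3⟩)
    · exact Or.inl h
    · omega
    · exact Or.inr ⟨h2, h3⟩
  · rintro (h | ⟨h1, h2⟩)
    · exact Or.inl h
    · exact Or.inr (Or.inr ⟨hx, h1, h2⟩)

lemma isNC_join {π₁ : Setoid (Fin g)} {π₂ : Setoid (Fin m)}
    (h₁ : IsNC π₁) (h₂ : IsNC π₂) : IsNC (join π₁ π₂) := by
  intro a b c d hab hbc hcd rac rbd
  simp only at hab hbc hcd
  have hab' : a.val < b.val := by exact_mod_cast hab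
  have hbc' : b.val < c.val := by exact_mod_cast hbc
  have hcd' : c.val < d.val := by exact_mod_cast hcd
  rw [join_r] at rac rbd ⊢
  rcases rac with h | ⟨h1,h2,h3,h4,h5⟩ | ⟨h1,h2,h3⟩
  · omega
  · -- a, c in gap, so b in gap
    have hb : 1 ≤ b.val ∧ b.val ≤ g := by omega
    rcases rbd with h' | ⟨g1,g2,g3,g4,g5⟩ | ⟨g1,g2,g3⟩
    · omega
    · -- all in gap; use h₁
      obtain ⟨p1, p2, hp⟩ := h5
      obtain ⟨q1, q2, hq⟩ := g5
      have key : π₁.r ⟨a.val-1, p1⟩ ⟨b.val-1, q1⟩ := by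
        refine h₁ ⟨a.val-1, p1⟩ ⟨b.val-1, q1⟩ ⟨c.val-1, p2⟩ ⟨d.val-1, q2⟩ ?_ ?_ ?_ hp hq
        all_goals simp; omega
      exact Or.inr (Or.inl ⟨h1, h2, hb.1, hb.2, ⟨p1, q1, key⟩⟩)
    · omega
  · -- a, c in tail class
    have hc : g+1 ≤ c.val := by omega
    rcases rbd with h' | ⟨g1,g2,g3,g4,g5⟩ | ⟨g1,g2,g3⟩
    · omega
    ·
      omega
    · -- b, d in tail class
      have hb : g+1 ≤ b.val := by omega
      have hd : g+1 ≤ d.val := by omega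
      -- a is 0 or ≥ g+1
      obtain ⟨p1, p2, hp⟩ := h3
      obtain ⟨q1, q2, hq⟩ := g3
      by_cases hbe : b.val = g + 1
      · -- b maps to 0 in π₂, same as a if a = 0; or a ≥ g+1 impossible (a < b = g+1, a=0)
        have ha0 : a.val = 0 := by omega
        refine Or.inr (Or.inr ⟨h1, Or.inr hb, ?_⟩)
        have : a.val - 1 - g = 0 := by omega
        rw [this]
        have : b.val - 1 - g = 0 := by omega
        rw [this]
        exact R1.refl (by omega)
      · -- strict order in π₂ indices
        have key : π₂.r ⟨a.val-1-g, p1⟩ ⟨b.val-1-g, q1⟩ := by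
          refine h₂ ⟨a.val-1-g, p1⟩ ⟨b.val-1-g, q1⟩ ⟨c.val-1-g, p2⟩ ⟨d.val-1-g, q2⟩
            ?_ ?_ ?_ hp hq
          all_goals simp; omega
        exact Or.inr (Or.inr ⟨h1, Or.inr hb, ⟨p1, q1, key⟩⟩)


-- NEW PART
/-- first return: elements `k > 0` related to the zero element -/
def frt {n : ℕ} (s : Setoid (Fin n)) : Finset (Fin n) :=
  Finset.univ.filter fun k => 0 < k.val ∧ ∃ z : Fin n, z.val = 0 ∧ s.r z k

def fr {n : ℕ} (s : Setoid (Fin n)) : ℕ :=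
  if h : (frt s).Nonempty then ((frt s).min' h).val - 1 else n - 1

lemma mem_frt {n : ℕ} {s : Setoid (Fin n)} {k : Fin n} :
    k ∈ frt s ↔ 0 < k.val ∧ ∃ z : Fin n, z.val = 0 ∧ s.r z k := by simp [frt]

lemma fr_join (π₁ : Setoid (Fin g)) (π₂ : Setoid (Fin m)) : fr (join π₁ π₂) = g := by
  rcases Nat.eq_zero_or_pos m with hm | hm
  · subst hm
    have he : frt (join π₁ π₂) = ∅ := by
      ext k
      simp only [mem_frt, Finset.notMem_empty, iff_false, not_and]
      rintro hk ⟨z, hz, hr⟩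
      replace hr : joinRel π₁ π₂ z k := join_r.mp hr
      rcases hr with h | ⟨h1,h2,h3,h4,h5⟩ | ⟨h1,h2,⟨p1,p2,hp⟩⟩
      · omega
      · omega
      · omega
    rw [fr, dif_neg (by rw [he]; exact Finset.not_nonempty_empty)]
    omega
  · have hg1 : g + 1 < g + m + 1 := by omega
    have hmem : (⟨g+1, hg1⟩ : Fin (g+m+1)) ∈ frt (join π₁ π₂) := by
      rw [mem_frt]
      refine ⟨Nat.succ_pos g, ⟨0, by omega⟩, rfl, ?_⟩
      rw [join_r]
      refine Or.inr (Or.inr ⟨Or.inl rfl, Or.inr le_rfl, ?_⟩)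
      show R1 π₂ ((0:ℕ) - 1 - g) (g + 1 - 1 - g)
      have e1 : (0 : ℕ) - 1 - g = 0 := by omega
      have e2 : g + 1 - 1 - g = 0 := by omega
      rw [e1, e2]
      exact ⟨hm, hm, π₂.iseqv.refl _⟩
    have hne : (frt (join π₁ π₂)).Nonempty := ⟨_, hmem⟩
    have hlb : ∀ k ∈ frt (join π₁ π₂), g + 1 ≤ k.val := by
      intro k hk
      rw [mem_frt] at hk
      obtain ⟨hk0, z, hz, hr⟩ := hk
      replace hr : joinRel π₁ π₂ z k := join_r.mp hr
      rcases hr with h | ⟨h1,h2,h3,h4,h5⟩ | ⟨h1,h2,h3⟩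
      · omega
      · omega
      · omega
    have : ((frt (join π₁ π₂)).min' hne).val = g + 1 := by
      have h1 := hlb _ ((frt (join π₁ π₂)).min'_mem hne)
      have h2 := (frt (join π₁ π₂)).min'_le _ hmem
      have h2' : ((frt (join π₁ π₂)).min' hne).val ≤ g + 1 := h2
      omega
    rw [fr, dif_pos hne, this]
    omega

def gapMap (g m : ℕ) (i : Fin g) : Fin (g+m+1) := ⟨i.val+1, by omega⟩
def tlMap (g m : ℕ) (i : Fin m) : Fin (g+m+1) := ⟨g+1+i.val, by omega⟩

def split1 {g m : ℕ} (s : Setoid (Fin (g+m+1))) : Setoid (Fin g) :=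
  Setoid.comap (gapMap g m) s
def split2 {g m : ℕ} (s : Setoid (Fin (g+m+1))) : Setoid (Fin m) :=
  Setoid.comap (tlMap g m) s

lemma comap_r {α β : Type*} (f : α → β) (s : Setoid β) (x y : α) :
    (Setoid.comap f s).r x y ↔ s.r (f x) (f y) := Iff.rfl

lemma isNC_comap {n n' : ℕ} {e : Fin n' → Fin n} (he : StrictMono e)
    {s : Setoid (Fin n)} (hs : IsNC s) : IsNC (Setoid.comap e s) := by
  intro a b c d hab hbc hcd rac rbd
  simp only at hab hbc hcd
  have hab2 : a < b := by rw [Fin.lt_def]; exact_mod_cast hab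
  have hbc2 : b < c := by rw [Fin.lt_def]; exact_mod_cast hbc
  have hcd2 : c < d := by rw [Fin.lt_def]; exact_mod_cast hcd
  refine hs (e a) (e b) (e c) (e d) ?_ ?_ ?_ rac rbd
  · show ((e a).val : ℤ) < ((e b).val : ℤ)
    exact_mod_cast he hab2
  · show ((e b).val : ℤ) < ((e c).val : ℤ)
    exact_mod_cast he hbc2
  · show ((e c).val : ℤ) < ((e d).val : ℤ)
    exact_mod_cast he hcd2

lemma gapMap_strictMono : StrictMono (gapMap g m) := by
  intro a b hab
  simp only [gapMap, Fin.mk_lt_mk]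
  omega

lemma tlMap_strictMono : StrictMono (tlMap g m) := by
  intro a b hab
  simp only [tlMap, Fin.mk_lt_mk]
  omega

lemma split1_join (π₁ : Setoid (Fin g)) (π₂ : Setoid (Fin m)) :
    split1 (join π₁ π₂) = π₁ := by
  apply Setoid.ext; intro a b
  show (join π₁ π₂).r (gapMap g m a) (gapMap g m b) ↔ π₁.r a b
  rw [join_r]
  have hva : (gapMap g m a).val = a.val + 1 := rfl
  have hvb : (gapMap g m b).val = b.val + 1 := rfl
  constructor
  · rintro (h | ⟨h1,h2,h3,h4,h5⟩ | ⟨h1,h2,h3⟩)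
    · have : a = b := Fin.ext (by omega)
      subst this; exact π₁.iseqv.refl _
    · obtain ⟨p1, p2, hp⟩ := h5
      have ea : (⟨(gapMap g m a).val - 1, p1⟩ : Fin g) = a :=
        Fin.ext (show (gapMap g m a).val - 1 = a.val by omega)
      have eb : (⟨(gapMap g m b).val - 1, p2⟩ : Fin g) = b :=
        Fin.ext (show (gapMap g m b).val - 1 = b.val by omega)
      rw [← ea, ← eb]; exact hp
    · omega
  · intro h
    have hag := a.isLt
    have hbg := b.isLt
    refine Or.inr (Or.inl ⟨by omega, by omega, by omega, by omega, ?_, ?_, ?_⟩)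
    · omega
    · omega
    · have ea : (⟨(gapMap g m a).val - 1, by omega⟩ : Fin g) = a :=
        Fin.ext (show (gapMap g m a).val - 1 = a.val by omega)
      have eb : (⟨(gapMap g m b).val - 1, by omega⟩ : Fin g) = b :=
        Fin.ext (show (gapMap g m b).val - 1 = b.val by omega)
      rw [ea, eb]; exact h

lemma split2_join (π₁ : Setoid (Fin g)) (π₂ : Setoid (Fin m)) :
    split2 (join π₁ π₂) = π₂ := by
  apply Setoid.ext; intro a b
  show (join π₁ π₂).r (tlMap g m a) (tlMap g m b) ↔ π₂.r a b
  rw [join_r]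
  have hva : (tlMap g m a).val = g + 1 + a.val := rfl
  have hvb : (tlMap g m b).val = g + 1 + b.val := rfl
  constructor
  · rintro (h | ⟨h1,h2,h3,h4,h5⟩ | ⟨h1,h2,h3⟩)
    · have : a = b := Fin.ext (by omega)
      subst this; exact π₂.iseqv.refl _
    · omega
    · obtain ⟨p1, p2, hp⟩ := h3
      have ea : (⟨(tlMap g m a).val - 1 - g, p1⟩ : Fin m) = a :=
        Fin.ext (show (tlMap g m a).val - 1 - g = a.val by omega)
      have eb : (⟨(tlMap g m b).val - 1 - g, p2⟩ : Fin m) = b :=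
        Fin.ext (show (tlMap g m b).val - 1 - g = b.val by omega)
      rw [← ea, ← eb]; exact hp
  · intro h
    have ham := a.isLt
    have hbm := b.isLt
    refine Or.inr (Or.inr ⟨by omega, by omega, ?_, ?_, ?_⟩)
    · omega
    · omega
    · have ea : (⟨(tlMap g m a).val - 1 - g, by omega⟩ : Fin m) = a :=
        Fin.ext (show (tlMap g m a).val - 1 - g = a.val by omega)
      have eb : (⟨(tlMap g m b).val - 1 - g, by omega⟩ : Fin m) = b :=
        Fin.ext (show (tlMap g m b).val - 1 - g = b.val by omega)
      rw [ea, eb]; exact h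

end Join

section Fiber
variable {g m : ℕ} {π : Setoid (Fin (g+m+1))}

lemma S1 (hfr : fr π = g) {z0 k : Fin (g+m+1)} (hz0 : z0.val = 0)
    (hk : π.r z0 k) : k.val = 0 ∨ g + 1 ≤ k.val := by
  by_cases hne : (frt π).Nonempty
  · have hmin : ((frt π).min' hne).val - 1 = g := by
      rw [fr, dif_pos hne] at hfr; exact hfr
    have hmem : ∀ j ∈ frt π, 1 ≤ j.val := by
      intro j hj; rw [mem_frt] at hj; omega
    have h1 := hmem _ ((frt π).min'_mem hne)
    rcases Nat.eq_zero_or_pos k.val with hk0 | hk0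
    · exact Or.inl hk0
    · have : k ∈ frt π := mem_frt.2 ⟨hk0, z0, hz0, hk⟩
      have := (frt π).min'_le _ this
      right
      have : ((frt π).min' hne).val ≤ k.val := this
      omega
  · rcases Nat.eq_zero_or_pos k.val with hk0 | hk0
    · exact Or.inl hk0
    · exact absurd ⟨k, mem_frt.2 ⟨hk0, z0, hz0, hk⟩⟩ hne

lemma frt_nonempty_of_fr (hfr : fr π = g) (hm : 0 < m) : (frt π).Nonempty := by
  by_contra hne
  rw [fr, dif_neg hne] at hfr
  omega

lemma S1b (hfr : fr π = g) (hm : 0 < m) {z0 s : Fin (g+m+1)} (hz0 : z0.val = 0)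
    (hs : s.val = g + 1) : π.r z0 s := by
  have hne := frt_nonempty_of_fr hfr hm
  have hmin : ((frt π).min' hne).val - 1 = g := by
    rw [fr, dif_pos hne] at hfr; exact hfr
  have hmem := (frt π).min'_mem hne
  rw [mem_frt] at hmem
  obtain ⟨hpos, z, hz, hr⟩ := hmem
  have hz' : z = z0 := Fin.ext (by omega)
  have hlb : ∀ j ∈ frt π, g + 1 ≤ j.val := by
    intro j hj
    rw [mem_frt] at hj
    obtain ⟨hj0, z', hz', hr'⟩ := hj
    rcases S1 hfr hz' hr' with h | h
    · omega
    · exact h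
  have : ((frt π).min' hne).val = g + 1 := by omega
  have : (frt π).min' hne = s := Fin.ext (by omega)
  rw [hz'] at hr
  rw [this] at hr
  exact hr

lemma S2 (hfr : fr π = g) (hnc : IsNC π) {x y : Fin (g+m+1)}
    (hx1 : 1 ≤ x.val) (hx2 : x.val ≤ g) (hy : g + 1 ≤ y.val) : ¬ π.r x y := by
  intro hr
  have hm : 0 < m := by have := y.isLt; omega
  have hz0 : (⟨0, by omega⟩ : Fin (g+m+1)).val = 0 := rfl
  have hs : (⟨g+1, by omega⟩ : Fin (g+m+1)).val = g + 1 := rfl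
  have hzs : π.r ⟨0, by omega⟩ ⟨g+1, by omega⟩ := S1b hfr hm hz0 hs
  rcases Nat.eq_or_lt_of_le hy with hy1 | hy1
  · -- y = s
    have : y = ⟨g+1, by omega⟩ := Fin.ext (by omega)
    rw [this] at hr
    have : π.r (⟨0, by omega⟩ : Fin (g+m+1)) x :=
      π.iseqv.trans hzs (π.iseqv.symm hr)
    rcases S1 hfr hz0 this with h | h <;> omega
  · -- 0 < x < g+1 < y crossing
    have key : π.r (⟨0, by omega⟩ : Fin (g+m+1)) x := by
      refine hnc ⟨0, by omega⟩ x ⟨g+1, by omega⟩ y ?_ ?_ ?_ hzs hr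
      · show ((0:ℕ) : ℤ) < (x.val : ℤ); exact_mod_cast hx1
      · show ((x.val : ℕ) : ℤ) < ((g+1 : ℕ) : ℤ); exact_mod_cast by omega
      · show (((g+1:ℕ)) : ℤ) < (y.val : ℤ); exact_mod_cast hy1
    rcases S1 hfr hz0 key with h | h <;> omega

lemma join_split (hfr : fr π = g) (hnc : IsNC π) :
    join (split1 π) (split2 π) = π := by
  apply Setoid.ext; intro x y
  show joinRel (split1 π) (split2 π) x y ↔ π.r x y
  have hgap1 : ∀ p (hp : p < g), (gapMap g m ⟨p, hp⟩ : Fin (g+m+1)).val = p + 1 := fun _ _ => rfl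
  have htl1 : ∀ p (hp : p < m), (tlMap g m ⟨p, hp⟩ : Fin (g+m+1)).val = g + 1 + p := fun _ _ => rfl
  constructor
  · rintro (h | ⟨h1,h2,h3,h4,h5⟩ | ⟨h1,h2,h3⟩)
    · have : x = y := Fin.ext h
      subst this; exact π.iseqv.refl _
    · obtain ⟨p1, p2, hp⟩ := h5
      have hp' : π.r (gapMap g m ⟨x.val-1, p1⟩) (gapMap g m ⟨y.val-1, p2⟩) := hp
      have ex : gapMap g m ⟨x.val-1, p1⟩ = x := Fin.ext (show x.val - 1 + 1 = x.val by omega)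
      have ey : gapMap g m ⟨y.val-1, p2⟩ = y := Fin.ext (show y.val - 1 + 1 = y.val by omega)
      rwa [ex, ey] at hp'
    · obtain ⟨p1, p2, hp⟩ := h3
      have hm : 0 < m := by omega
      have hp' : π.r (tlMap g m ⟨x.val-1-g, p1⟩) (tlMap g m ⟨y.val-1-g, p2⟩) := hp
      have hzs : π.r (⟨0, by omega⟩ : Fin (g+m+1)) ⟨g+1, by omega⟩ :=
        S1b hfr hm rfl rfl
      -- identify tlMap ⟨x-1-g⟩ with x (or with s=g+1 when x=0)
      rcases h1 with hx0 | hxg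
      · have ex : tlMap g m ⟨x.val-1-g, p1⟩ = ⟨g+1, by omega⟩ := Fin.ext (show g + 1 + (x.val - 1 - g) = g + 1 by omega)
        rw [ex] at hp'
        have hx : x = ⟨0, by omega⟩ := Fin.ext hx0
        rcases h2 with hy0 | hyg
        · have hy : x = y := Fin.ext (by omega)
          subst hy; exact π.iseqv.refl _
        · have ey : tlMap g m ⟨y.val-1-g, p2⟩ = y := Fin.ext (show g + 1 + (y.val - 1 - g) = y.val by omega)
          rw [ey] at hp'
          rw [hx]
          exact π.iseqv.trans hzs hp'
      · have ex : tlMap g m ⟨x.val-1-g, p1⟩ = x := Fin.ext (show g + 1 + (x.val - 1 - g) = x.val by omega)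
        rw [ex] at hp'
        rcases h2 with hy0 | hyg
        · have ey : tlMap g m ⟨y.val-1-g, p2⟩ = ⟨g+1, by omega⟩ := Fin.ext (show g + 1 + (y.val - 1 - g) = g + 1 by omega)
          rw [ey] at hp'
          have hy : y = ⟨0, by omega⟩ := Fin.ext hy0
          rw [hy]
          exact π.iseqv.trans hp' (π.iseqv.symm hzs)
        · have ey : tlMap g m ⟨y.val-1-g, p2⟩ = y := Fin.ext (show g + 1 + (y.val - 1 - g) = y.val by omega)
          rwa [ey] at hp'
  · intro hr
    have hxlt := x.isLt
    have hylt := y.isLt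
    rcases Nat.lt_or_ge x.val 1 with hx0 | hx
    · -- x = 0
      have hx0' : x.val = 0 := by omega
      rcases Nat.lt_or_ge y.val 1 with hy0 | hy1
      · exact Or.inl (by omega)
      · rcases Nat.lt_or_ge y.val (g+1) with hyg | hyg
        · -- y in gap: contradiction
          exfalso
          rcases S1 hfr hx0' hr with h | h <;> omega
        · -- y in tail
          have hm : 0 < m := by omega
          have hzs : π.r (⟨0, by omega⟩ : Fin (g+m+1)) ⟨g+1, by omega⟩ :=
            S1b hfr hm rfl rfl
          refine Or.inr (Or.inr ⟨Or.inl hx0', Or.inr (by omega), ?_⟩)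
          refine ⟨by omega, by omega, ?_⟩
          show π.r (tlMap g m ⟨x.val-1-g, by omega⟩) (tlMap g m ⟨y.val-1-g, by omega⟩)
          have ex : tlMap g m ⟨x.val-1-g, by omega⟩ = (⟨g+1, by omega⟩ : Fin (g+m+1)) :=
            Fin.ext (show g + 1 + (x.val - 1 - g) = g + 1 by omega)
          have ey : tlMap g m ⟨y.val-1-g, by omega⟩ = y := Fin.ext (show g + 1 + (y.val - 1 - g) = y.val by omega)
          rw [ex, ey]
          have hx : x = ⟨0, by omega⟩ := Fin.ext hx0'
          rw [hx] at hr
          exact π.iseqv.trans (π.iseqv.symm hzs) hr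
    · -- x.val ≥ 1
      rcases Nat.lt_or_ge x.val (g+1) with hxg | hxg
      · -- x in gap
        rcases Nat.lt_or_ge y.val 1 with hy0 | hy
        · exfalso
          have hy0' : y.val = 0 := by omega
          rcases S1 hfr hy0' (π.iseqv.symm hr) with h | h <;> omega
        · rcases Nat.lt_or_ge y.val (g+1) with hyg | hyg
          · -- both gap
            refine Or.inr (Or.inl ⟨by omega, by omega, by omega, by omega, by omega, by omega, ?_⟩)
            show π.r (gapMap g m ⟨x.val-1, by omega⟩) (gapMap g m ⟨y.val-1, by omega⟩)
            have ex : gapMap g m ⟨x.val-1, by omega⟩ = x := Fin.ext (show x.val - 1 + 1 = x.val by omega)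
            have ey : gapMap g m ⟨y.val-1, by omega⟩ = y := Fin.ext (show y.val - 1 + 1 = y.val by omega)
            rw [ex, ey]; exact hr
          · exact absurd hr (S2 hfr hnc (by omega) (by omega) (by omega))
      · -- x in tail
        rcases Nat.lt_or_ge y.val 1 with hy0 | hy
        · -- y = 0: symmetric to x=0 case
          have hy0' : y.val = 0 := by omega
          have hm : 0 < m := by omega
          have hzs : π.r (⟨0, by omega⟩ : Fin (g+m+1)) ⟨g+1, by omega⟩ :=
            S1b hfr hm rfl rfl
          refine Or.inr (Or.inr ⟨Or.inr (by omega), Or.inl hy0', ?_⟩)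
          refine ⟨by omega, by omega, ?_⟩
          show π.r (tlMap g m ⟨x.val-1-g, by omega⟩) (tlMap g m ⟨y.val-1-g, by omega⟩)
          have ex : tlMap g m ⟨x.val-1-g, by omega⟩ = x := Fin.ext (show g + 1 + (x.val - 1 - g) = x.val by omega)
          have ey : tlMap g m ⟨y.val-1-g, by omega⟩ = (⟨g+1, by omega⟩ : Fin (g+m+1)) :=
            Fin.ext (show g + 1 + (y.val - 1 - g) = g + 1 by omega)
          rw [ex, ey]
          have hy : y = ⟨0, by omega⟩ := Fin.ext hy0'
          rw [hy] at hr
          exact π.iseqv.trans hr hzs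
        · rcases Nat.lt_or_ge y.val (g+1) with hyg | hyg
          · exact absurd (π.iseqv.symm hr) (S2 hfr hnc (by omega) (by omega) (by omega))
          · -- both tail
            refine Or.inr (Or.inr ⟨Or.inr (by omega), Or.inr (by omega), ?_⟩)
            refine ⟨by omega, by omega, ?_⟩
            show π.r (tlMap g m ⟨x.val-1-g, by omega⟩) (tlMap g m ⟨y.val-1-g, by omega⟩)
            have ex : tlMap g m ⟨x.val-1-g, by omega⟩ = x := Fin.ext (show g + 1 + (x.val - 1 - g) = x.val by omega)
            have ey : tlMap g m ⟨y.val-1-g, by omega⟩ = y := Fin.ext (show g + 1 + (y.val - 1 - g) = y.val by omega)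
            rw [ex, ey]; exact hr

end Fiber

section Weights
variable {g m : ℕ} (κ : ℕ → ℂ) (π₁ : Setoid (Fin g)) (π₂ : Setoid (Fin m))

lemma rel_gap {a b : Fin g} :
    (join π₁ π₂).r (gapMap g m a) (gapMap g m b) ↔ π₁.r a b := by
  have : (split1 (join π₁ π₂)).r a b ↔ π₁.r a b := by rw [split1_join]
  exact this

lemma rel_tl {a b : Fin m} :
    (join π₁ π₂).r (tlMap g m a) (tlMap g m b) ↔ π₂.r a b := by
  have : (split2 (join π₁ π₂)).r a b ↔ π₂.r a b := by rw [split2_join]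
  exact this

lemma not_rel_gap_z0 {i : Fin g} :
    ¬ (join π₁ π₂).r (gapMap g m i) ⟨0, by omega⟩ := by
  intro h
  have hv : (gapMap g m i).val = i.val + 1 := rfl
  replace h := join_r.mp h
  rcases h with h | ⟨h1,h2,h3,h4,h5⟩ | ⟨h1,h2,h3⟩
  · simp only [hv] at h
    exact absurd h (by simp)
  · exact absurd h3 (by simp)
  · rcases h1 with h1 | h1 <;> omega

lemma not_rel_gap_tl {i : Fin g} {k : Fin m} :
    ¬ (join π₁ π₂).r (gapMap g m i) (tlMap g m k) := by
  intro h
  have hv : (gapMap g m i).val = i.val + 1 := rfl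
  have hw : (tlMap g m k).val = g + 1 + k.val := rfl
  have hig := i.isLt
  replace h := join_r.mp h
  rcases h with h | ⟨h1,h2,h3,h4,h5⟩ | ⟨h1,h2,h3⟩
  · omega
  · omega
  · rcases h1 with h1 | h1 <;> omega

lemma rel_z0_tl (hm : 0 < m) {k : Fin m} :
    (join π₁ π₂).r ⟨0, by omega⟩ (tlMap g m k) ↔ π₂.r ⟨0, hm⟩ k := by
  have hw : (tlMap g m k).val = g + 1 + k.val := rfl
  rw [join_r]
  rw [joinRel_tl_iff (Or.inl rfl)]
  constructor
  · rintro (h | ⟨h1, p1, p2, hp⟩)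
    · exfalso
      have : (0:ℕ) = g + 1 + k.val := h
      omega
    · have e1 : (⟨(0:ℕ) - 1 - g, p1⟩ : Fin m) = ⟨0, hm⟩ :=
        Fin.ext (show (0:ℕ) - 1 - g = 0 by omega)
      have e2 : (⟨(tlMap g m k).val - 1 - g, p2⟩ : Fin m) = k :=
        Fin.ext (show (tlMap g m k).val - 1 - g = k.val by omega)
      rwa [e1, e2] at hp
  · intro h
    refine Or.inr ⟨Or.inr (by omega), ?_⟩
    refine ⟨by omega, by omega, ?_⟩
    have e1 : (⟨(0:ℕ) - 1 - g, by omega⟩ : Fin m) = ⟨0, hm⟩ :=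
      Fin.ext (show (0:ℕ) - 1 - g = 0 by omega)
    have e2 : (⟨(tlMap g m k).val - 1 - g, by omega⟩ : Fin m) = k :=
      Fin.ext (show (tlMap g m k).val - 1 - g = k.val by omega)
    rw [e1, e2]
    exact h

lemma cls_gap (i : Fin g) :
    cls (join π₁ π₂) (gapMap g m i) = (cls π₁ i).image (gapMap g m) := by
  ext y
  rw [mem_cls, Finset.mem_image]
  have hv : (gapMap g m i).val = i.val + 1 := rfl
  have hig := i.isLt
  constructor
  · intro h
    replace h := join_r.mp h
    rw [joinRel_gap_iff ⟨by omega, by omega⟩] at h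
    obtain ⟨h1, h2, p1, p2, hp⟩ := h
    refine ⟨⟨y.val - 1, p2⟩, mem_cls.2 ?_, Fin.ext (show y.val - 1 + 1 = y.val by omega)⟩
    have e1 : (⟨(gapMap g m i).val - 1, p1⟩ : Fin g) = i :=
      Fin.ext (show (gapMap g m i).val - 1 = i.val by omega)
    rwa [e1] at hp
  · rintro ⟨k, hk, rfl⟩
    exact (rel_gap π₁ π₂).2 (mem_cls.1 hk)

lemma minRep_gap (i : Fin g) :
    minRep (join π₁ π₂) (gapMap g m i) ↔ minRep π₁ i := by
  constructor
  · intro h k hk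
    have := h (gapMap g m k) ((rel_gap π₁ π₂).2 hk)
    have hle : (gapMap g m i).val ≤ (gapMap g m k).val := this
    show i.val ≤ k.val
    have hv : (gapMap g m i).val = i.val + 1 := rfl
    have hw : (gapMap g m k).val = k.val + 1 := rfl
    omega
  · intro h y hy
    have : y ∈ cls (join π₁ π₂) (gapMap g m i) := mem_cls.2 hy
    rw [cls_gap] at this
    obtain ⟨k, hk, rfl⟩ := Finset.mem_image.1 this
    have := h k (mem_cls.1 hk)
    show (gapMap g m i).val ≤ (gapMap g m k).val
    have hv : (gapMap g m i).val = i.val + 1 := rfl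
    have hw : (gapMap g m k).val = k.val + 1 := rfl
    have : i.val ≤ k.val := this
    omega

lemma cls_z0_pos (hm : 0 < m) :
    cls (join π₁ π₂) ⟨0, by omega⟩ =
      insert ⟨0, by omega⟩ ((cls π₂ ⟨0, hm⟩).image (tlMap g m)) := by
  ext y
  rw [mem_cls, Finset.mem_insert, Finset.mem_image]
  constructor
  · intro h
    replace h := join_r.mp h
    rw [joinRel_tl_iff (Or.inl rfl)] at h
    rcases h with h | ⟨h1, p1, p2, hp⟩
    · have h' : (0:ℕ) = y.val := h
      exact Or.inl (Fin.ext (show y.val = 0 by omega))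
    · rcases h1 with h1 | h1
      · exact Or.inl (Fin.ext h1)
      · right
        have hylt := y.isLt
        refine ⟨⟨y.val - 1 - g, p2⟩, mem_cls.2 ?_, Fin.ext (show g + 1 + (y.val - 1 - g) = y.val by omega)⟩
        have e1 : (⟨(0:ℕ) - 1 - g, p1⟩ : Fin m) = ⟨0, hm⟩ :=
        Fin.ext (show (0:ℕ) - 1 - g = 0 by omega)
        rwa [e1] at hp
  · rintro (rfl | ⟨k, hk, rfl⟩)
    · exact (join π₁ π₂).iseqv.refl _
    · exact (rel_z0_tl π₁ π₂ hm).2 (mem_cls.1 hk)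

lemma cls_z0_zero (hm : m = 0) :
    cls (join π₁ π₂) ⟨0, by omega⟩ = {⟨0, by omega⟩} := by
  subst hm
  ext y
  rw [mem_cls, Finset.mem_singleton]
  constructor
  · intro h
    replace h := join_r.mp h
    have hylt := y.isLt
    rcases h with h | ⟨h1,h2,h3,h4,h5⟩ | ⟨h1,h2,⟨p1,p2,hp⟩⟩
    · have h' : (0:ℕ) = y.val := h
      exact Fin.ext (show y.val = 0 by omega)
    · exact absurd h1 (by simp)
    · omega
  · rintro rfl
    exact (join π₁ π₂).iseqv.refl _

lemma minRep_z0 : minRep (join π₁ π₂) ⟨0, by omega⟩ := by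
  intro k _
  show (0:ℕ) ≤ k.val
  omega

lemma tl_cls_of_not_rel0 (hm : 0 < m) {k : Fin m} (hk : ¬ π₂.r k ⟨0, hm⟩) :
    cls (join π₁ π₂) (tlMap g m k) = (cls π₂ k).image (tlMap g m) := by
  ext y
  rw [mem_cls, Finset.mem_image]
  have hw : (tlMap g m k).val = g + 1 + k.val := rfl
  constructor
  · intro h
    replace h := join_r.mp h
    rw [joinRel_tl_iff (Or.inr (by omega))] at h
    rcases h with h | ⟨h1, p1, p2, hp⟩
    · refine ⟨k, mem_cls.2 (π₂.iseqv.refl k), Fin.ext (by omega)⟩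
    · rcases h1 with h1 | h1
      · exfalso
        have e2 : (⟨y.val - 1 - g, p2⟩ : Fin m) = ⟨0, hm⟩ :=
          Fin.ext (show y.val - 1 - g = 0 by omega)
        have e1 : (⟨(tlMap g m k).val - 1 - g, p1⟩ : Fin m) = k :=
          Fin.ext (show (tlMap g m k).val - 1 - g = k.val by omega)
        rw [e1, e2] at hp
        exact hk hp
      · have hylt := y.isLt
        refine ⟨⟨y.val - 1 - g, p2⟩, mem_cls.2 ?_,
          Fin.ext (show g + 1 + (y.val - 1 - g) = y.val by omega)⟩
        have e1 : (⟨(tlMap g m k).val - 1 - g, p1⟩ : Fin m) = k :=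
          Fin.ext (show (tlMap g m k).val - 1 - g = k.val by omega)
        rwa [e1] at hp
  · rintro ⟨k', hk', rfl⟩
    exact (rel_tl π₁ π₂).2 (mem_cls.1 hk')

lemma tl_minRep_of_not_rel0 (hm : 0 < m) {k : Fin m} (hk : ¬ π₂.r k ⟨0, hm⟩) :
    minRep (join π₁ π₂) (tlMap g m k) ↔ minRep π₂ k := by
  constructor
  · intro h k' hk'
    have := h (tlMap g m k') ((rel_tl π₁ π₂).2 hk')
    have hle : (tlMap g m k).val ≤ (tlMap g m k').val := this
    show k.val ≤ k'.val
    have hv : (tlMap g m k).val = g + 1 + k.val := rfl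
    have hw : (tlMap g m k').val = g + 1 + k'.val := rfl
    omega
  · intro h y hy
    have : y ∈ cls (join π₁ π₂) (tlMap g m k) := mem_cls.2 hy
    rw [tl_cls_of_not_rel0 π₁ π₂ hm hk] at this
    obtain ⟨k', hk', rfl⟩ := Finset.mem_image.1 this
    have := h k' (mem_cls.1 hk')
    show (tlMap g m k).val ≤ (tlMap g m k').val
    have hv : (tlMap g m k).val = g + 1 + k.val := rfl
    have hw : (tlMap g m k').val = g + 1 + k'.val := rfl
    have : k.val ≤ k'.val := this
    omega

end Weights

section WeightMain
variable {g m : ℕ} (κ : ℕ → ℂ) (π₁ : Setoid (Fin g)) (π₂ : Setoid (Fin m))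

lemma prod_decomp (F : Fin (g+m+1) → ℂ) :
    ∏ x, F x = F ⟨0, by omega⟩ *
      ((∏ i : Fin g, F (gapMap g m i)) * ∏ k : Fin m, F (tlMap g m k)) := by
  have hdec : (Finset.univ : Finset (Fin (g+m+1))) =
      insert ⟨0, by omega⟩ ((Finset.univ.image (gapMap g m)) ∪
        (Finset.univ.image (tlMap g m))) := by
    ext x
    simp only [Finset.mem_univ, true_iff, Finset.mem_insert, Finset.mem_union,
      Finset.mem_image]
    have hx := x.isLt
    rcases Nat.lt_or_ge x.val 1 with h0 | h1
    · exact Or.inl (Fin.ext (show x.val = 0 by omega))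
    · rcases Nat.lt_or_ge x.val (g+1) with hg | hg
      · refine Or.inr (Or.inl ⟨⟨x.val - 1, by omega⟩, trivial,
          Fin.ext (show x.val - 1 + 1 = x.val by omega)⟩)
      · refine Or.inr (Or.inr ⟨⟨x.val - 1 - g, by omega⟩, trivial,
          Fin.ext (show g + 1 + (x.val - 1 - g) = x.val by omega)⟩)
  rw [hdec, Finset.prod_insert, Finset.prod_union]
  · rw [Finset.prod_image (fun a _ b _ h => gapMap_strictMono.injective h),
        Finset.prod_image (fun a _ b _ h => tlMap_strictMono.injective h)]
  · -- disjoint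
    rw [Finset.disjoint_left]
    rintro y hy1 hy2
    obtain ⟨a, _, rfl⟩ := Finset.mem_image.1 hy1
    obtain ⟨b, _, hb⟩ := Finset.mem_image.1 hy2
    have h1 : (gapMap g m a).val = a.val + 1 := rfl
    have h2 : (tlMap g m b).val = g + 1 + b.val := rfl
    have := a.isLt
    have : (tlMap g m b).val = (gapMap g m a).val := congrArg Fin.val hb
    omega
  · -- 0 not in union
    rw [Finset.mem_union]
    rintro (h | h)
    · obtain ⟨a, _, ha⟩ := Finset.mem_image.1 h
      have : (gapMap g m a).val = (⟨0, by omega⟩ : Fin (g+m+1)).val := congrArg Fin.val ha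
      have h1 : (gapMap g m a).val = a.val + 1 := rfl
      have h2 : (⟨0, by omega⟩ : Fin (g+m+1)).val = 0 := rfl
      omega
    · obtain ⟨a, _, ha⟩ := Finset.mem_image.1 h
      have : (tlMap g m a).val = (⟨0, by omega⟩ : Fin (g+m+1)).val := congrArg Fin.val ha
      have h1 : (tlMap g m a).val = g + 1 + a.val := rfl
      have h2 : (⟨0, by omega⟩ : Fin (g+m+1)).val = 0 := rfl
      omega

lemma gap_factor (j : ℕ) :
    ∏ i : Fin g, wjElt κ j (join π₁ π₂) (gapMap g m i) = fval κ π₁ := by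
  rw [fval_eq_prod]
  refine Finset.prod_congr rfl fun i _ => ?_
  rw [wjElt]
  by_cases h : minRep π₁ i
  · rw [if_pos ((minRep_gap π₁ π₂ i).2 h), if_pos h]
    have hcard : (cls (join π₁ π₂) (gapMap g m i)).card = (cls π₁ i).card := by
      rw [cls_gap, Finset.card_image_of_injective _ gapMap_strictMono.injective]
    rw [hcard]
    have : (gapMap g m i).val = i.val + 1 := rfl
    rw [if_neg (by omega), Nat.add_zero]
  · rw [if_neg (fun hc => h ((minRep_gap π₁ π₂ i).1 hc)), if_neg h]

lemma wjv_join (j : ℕ) :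
    wjv κ j (join π₁ π₂) = fval κ π₁ * wjv κ (j+1) π₂ := by
  rw [wjv, if_neg (by omega : ¬ (g+m+1 = 0)), one_mul,
    prod_decomp (wjElt κ j (join π₁ π₂)), gap_factor]
  rcases Nat.eq_zero_or_pos m with hm | hm
  · subst hm
    have e0 : wjElt κ j (join π₁ π₂) ⟨0, by omega⟩ = κ (1 + j) := by
      rw [wjElt, if_pos (minRep_z0 π₁ π₂), cls_z0_zero π₁ π₂ rfl]
      simp
    rw [e0]
    have e1 : (∏ k : Fin 0, wjElt κ j (join π₁ π₂) (tlMap g 0 k)) = 1 :=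
      Finset.prod_empty
    rw [e1, wjv, if_pos rfl]
    have e2 : (∏ i : Fin 0, wjElt κ (j+1) π₂ i) = 1 := Finset.prod_empty
    rw [e2]
    rw [Nat.add_comm 1 j]
    ring
  · have hz : (⟨0, hm⟩ : Fin m) ∈ (Finset.univ : Finset (Fin m)) := Finset.mem_univ _
    have key : wjElt κ j (join π₁ π₂) ⟨0, by omega⟩ *
        ∏ k : Fin m, wjElt κ j (join π₁ π₂) (tlMap g m k) =
        ∏ k : Fin m, wjElt κ (j+1) π₂ k := by
      rw [← Finset.mul_prod_erase Finset.univ (fun k => wjElt κ j (join π₁ π₂) (tlMap g m k)) hz,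
          ← Finset.mul_prod_erase Finset.univ (wjElt κ (j+1) π₂) hz]
      have f1 : wjElt κ j (join π₁ π₂) (tlMap g m ⟨0, hm⟩) = 1 := by
        rw [wjElt, if_neg]
        intro hmin
        have hrel : (join π₁ π₂).r (tlMap g m ⟨0, hm⟩) ⟨0, by omega⟩ :=
          (join π₁ π₂).iseqv.symm ((rel_z0_tl π₁ π₂ hm).2 (π₂.iseqv.refl _))
        have := hmin _ hrel
        have hle : (tlMap g m ⟨0, hm⟩).val ≤ (⟨0, by omega⟩ : Fin (g+m+1)).val := this
        have hv : (tlMap g m ⟨0, hm⟩).val = g + 1 + 0 := rfl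
        have hw : (⟨0, by omega⟩ : Fin (g+m+1)).val = 0 := rfl
        omega
      have f2 : wjElt κ j (join π₁ π₂) ⟨0, by omega⟩ = wjElt κ (j+1) π₂ ⟨0, hm⟩ := by
        have hmr2 : minRep π₂ ⟨0, hm⟩ := by
          intro k hk
          show (0:ℕ) ≤ k.val
          omega
        rw [wjElt, wjElt, if_pos (minRep_z0 π₁ π₂), if_pos hmr2]
        have hc : (cls (join π₁ π₂) ⟨0, by omega⟩).card = (cls π₂ ⟨0, hm⟩).card + 1 := by
            rw [cls_z0_pos π₁ π₂ hm, Finset.card_insert_of_notMem, 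
              Finset.card_image_of_injective _ tlMap_strictMono.injective]
            intro hmem
            obtain ⟨a, _, ha⟩ := Finset.mem_image.1 hmem
            have : (tlMap g m a).val = (⟨0, by omega⟩ : Fin (g+m+1)).val := congrArg Fin.val ha
            have h1 : (tlMap g m a).val = g + 1 + a.val := rfl
            have h2 : (⟨0, by omega⟩ : Fin (g+m+1)).val = 0 := rfl
            omega
        have v1 : (⟨0, by omega⟩ : Fin (g+m+1)).val = 0 := rfl
        have v2 : (⟨0, hm⟩ : Fin m).val = 0 := rfl
        rw [if_pos v1, if_pos v2, hc]
        congr 1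
        omega
      rw [f1, f2, one_mul]
      congr 1
      refine Finset.prod_congr rfl fun k hk => ?_
      have hk0 : k ≠ ⟨0, hm⟩ := (Finset.mem_erase.1 hk).1
      have hkv : 0 < k.val := by
        rcases Nat.eq_zero_or_pos k.val with h | h
        · exact absurd (Fin.ext h) hk0
        · exact h
      by_cases hrel : π₂.r k ⟨0, hm⟩
      · rw [wjElt, wjElt, if_neg, if_neg]
        · intro hmin
          have := hmin _ hrel
          have hle : k.val ≤ (⟨0, hm⟩ : Fin m).val := this
          have : (⟨0, hm⟩ : Fin m).val = 0 := rfl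
          omega
        · intro hmin
          have hr2 : (join π₁ π₂).r (tlMap g m k) ⟨0, by omega⟩ :=
            (join π₁ π₂).iseqv.symm ((rel_z0_tl π₁ π₂ hm).2 (π₂.iseqv.symm hrel))
          have := hmin _ hr2
          have hle : (tlMap g m k).val ≤ (⟨0, by omega⟩ : Fin (g+m+1)).val := this
          have hv : (tlMap g m k).val = g + 1 + k.val := rfl
          have hw : (⟨0, by omega⟩ : Fin (g+m+1)).val = 0 := rfl
          omega
      · rw [wjElt, wjElt]
        by_cases hmr : minRep π₂ k
        · rw [if_pos ((tl_minRep_of_not_rel0 π₁ π₂ hm hrel).2 hmr), if_pos hmr]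
          have hc : (cls (join π₁ π₂) (tlMap g m k)).card = (cls π₂ k).card := by
            rw [tl_cls_of_not_rel0 π₁ π₂ hm hrel,
              Finset.card_image_of_injective _ tlMap_strictMono.injective]
          rw [hc]
          have v1 : (tlMap g m k).val = g + 1 + k.val := rfl
          rw [if_neg (by omega), if_neg (by omega)]
        · rw [if_neg (fun hc => hmr ((tl_minRep_of_not_rel0 π₁ π₂ hm hrel).1 hc)), if_neg hmr]
    rw [wjv, if_neg (by omega), one_mul, ← key]
    ring

end WeightMain

section FiberSum

lemma fiber_sum (κ : ℕ → ℂ) (j g m : ℕ) :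
    (∑ π ∈ Finset.univ.filter
        (fun π : {s : Setoid (Fin (g+m+1)) // IsNC s} => fr π.1 = g), wjv κ j π.1)
      = Msum κ g * Asum κ (j+1) m := by
  rw [Msum, Asum, Fintype.sum_mul_sum, ← Fintype.sum_prod_type']
  refine Finset.sum_nbij'
    (fun π => (⟨split1 π.1, isNC_comap gapMap_strictMono π.2⟩,
               ⟨split2 π.1, isNC_comap tlMap_strictMono π.2⟩))
    (fun p => ⟨join p.1.1 p.2.1, isNC_join p.1.2 p.2.2⟩)
    (fun π hπ => Finset.mem_univ _)
    (fun p hp => Finset.mem_filter.2 ⟨Finset.mem_univ _, fr_join _ _⟩)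
    (fun π hπ => ?_) (fun p hp => ?_) (fun π hπ => ?_)
  · exact Subtype.ext (join_split (Finset.mem_filter.1 hπ).2 π.2)
  · exact Prod.ext (Subtype.ext (split1_join _ _)) (Subtype.ext (split2_join _ _))
  · have hfr := (Finset.mem_filter.1 hπ).2
    conv_lhs => rw [← join_split hfr π.2]
    exact wjv_join κ (split1 π.1) (split2 π.1) j

lemma fr_lt {n : ℕ} (hn : n ≠ 0) (s : Setoid (Fin n)) : fr s < n := by
  rw [fr]
  split
  · rename_i h
    have := ((frt s).min' h).isLt
    omega
  · omega

lemma Asum_rec (κ : ℕ → ℂ) (j n : ℕ) (hn : n ≠ 0) :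
    Asum κ j n = ∑ g ∈ Finset.range n, Msum κ g * Asum κ (j+1) (n - 1 - g) := by
  have hmaps : ∀ π ∈ (Finset.univ : Finset {s : Setoid (Fin n) // IsNC s}),
      fr π.1 ∈ Finset.range n := fun π _ => Finset.mem_range.2 (fr_lt hn π.1)
  calc Asum κ j n
      = ∑ g ∈ Finset.range n,
          ∑ π ∈ Finset.univ.filter
            (fun π : {s : Setoid (Fin n) // IsNC s} => fr π.1 = g), wjv κ j π.1 :=
        (Finset.sum_fiberwise_of_maps_to hmaps _).symm
    _ = ∑ g ∈ Finset.range n, Msum κ g * Asum κ (j+1) (n - 1 - g) := by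
        refine Finset.sum_congr rfl fun g hg => ?_
        rw [Finset.mem_range] at hg
        obtain ⟨m, rfl⟩ : ∃ m, n = g + m + 1 := ⟨n - g - 1, by omega⟩
        have e : g + m + 1 - 1 - g = m := by omega
        rw [e]
        exact fiber_sum κ j g m

end FiberSum

namespace PSC
open PowerSeries Finset

lemma coeff_pscomp (f g : PowerSeries ℂ) (n : ℕ) :
    coeff n (pscomp f g) = ∑ k ∈ range (n+1), coeff k f * coeff n (g^k) := by
  rw [pscomp, coeff_mk]

lemma coeff_pow_eq_zero {g : PowerSeries ℂ} (hg : constantCoeff g = 0)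
    {n k : ℕ} (h : n < k) : coeff n (g^k) = 0 := by
  have hdvd : (X : PowerSeries ℂ)^k ∣ g^k := pow_dvd_pow_of_dvd (X_dvd_iff.2 hg) k
  exact X_pow_dvd_iff.1 hdvd n h

lemma coeff_pscomp_big (f g : PowerSeries ℂ) (hg : constantCoeff g = 0) {n N : ℕ}
    (hN : n < N) :
    coeff n (pscomp f g) = ∑ k ∈ range N, coeff k f * coeff n (g^k) := by
  rw [coeff_pscomp]
  refine Finset.sum_subset ?_ ?_
  · intro k hk; rw [mem_range] at *; omega
  · intro k _ hk
    rw [mem_range] at hk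
    push_neg at hk
    rw [coeff_pow_eq_zero hg (by omega), mul_zero]

lemma constantCoeff_pscomp (f g : PowerSeries ℂ) :
    constantCoeff (pscomp f g) = constantCoeff f := by
  have h0 := coeff_pscomp f g 0
  rw [← coeff_zero_eq_constantCoeff, h0]
  simp

lemma pscomp_one (g : PowerSeries ℂ) : pscomp 1 g = 1 := by
  ext n
  rw [coeff_pscomp, PowerSeries.coeff_one]
  rcases Nat.eq_zero_or_pos n with rfl | hn
  · simp
  · rw [if_neg (by omega)]
    refine Finset.sum_eq_zero fun k hk => ?_
    rcases Nat.eq_zero_or_pos k with rfl | hk0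
    · simp [PowerSeries.coeff_one, hn.ne']
    · simp [PowerSeries.coeff_one, hk0.ne']

lemma pscomp_mul (f₁ f₂ g : PowerSeries ℂ) (hg : constantCoeff g = 0) :
    pscomp (f₁ * f₂) g = pscomp f₁ g * pscomp f₂ g := by
  ext n
  calc coeff n (pscomp (f₁ * f₂) g)
      = ∑ k ∈ range (n+1), ∑ p ∈ HasAntidiagonal.antidiagonal k,
          coeff p.1 f₁ * coeff p.2 f₂ * coeff n (g^(p.1+p.2)) := by
        rw [coeff_pscomp]
        refine Finset.sum_congr rfl fun k hk => ?_
        rw [coeff_mul, Finset.sum_mul]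
        refine Finset.sum_congr rfl fun p hp => ?_
        rw [Finset.HasAntidiagonal.mem_antidiagonal] at hp
        rw [hp]
    _ = ∑ p ∈ ((range (n+1)) ×ˢ (range (n+1))).filter (fun p => p.1 + p.2 ≤ n),
          coeff p.1 f₁ * coeff p.2 f₂ * coeff n (g^(p.1+p.2)) := by
        rw [Finset.sum_sigma']
        refine Finset.sum_nbij' (fun x => x.2) (fun p => ⟨p.1+p.2, p⟩) ?_ ?_ ?_ ?_ ?_
        · rintro ⟨k, p⟩ hp
          simp only [Finset.mem_sigma, mem_range, Finset.HasAntidiagonal.mem_antidiagonal] at hp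
          simp only [Finset.mem_filter, Finset.mem_product, mem_range]
          omega
        · intro p hp
          simp only [Finset.mem_filter, Finset.mem_product, mem_range] at hp
          simp only [Finset.mem_sigma, mem_range, Finset.HasAntidiagonal.mem_antidiagonal]
          exact ⟨by omega, trivial⟩
        · rintro ⟨k, p⟩ hp
          simp only [Finset.mem_sigma, mem_range, Finset.HasAntidiagonal.mem_antidiagonal] at hp
          exact Sigma.ext hp.2 (heq_of_eq rfl)
        · intro p hp; rfl
        · rintro ⟨k, p⟩ _; rfl
    _ = ∑ p ∈ (range (n+1)) ×ˢ (range (n+1)),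
          coeff p.1 f₁ * coeff p.2 f₂ * coeff n (g^(p.1+p.2)) := by
        refine Finset.sum_subset (Finset.filter_subset _ _) ?_
        intro p hp1 hp2
        rw [Finset.mem_filter] at hp2
        have h : ¬ (p.1 + p.2 ≤ n) := fun hc => hp2 ⟨hp1, hc⟩
        rw [coeff_pow_eq_zero hg (by omega), mul_zero]
    _ = ∑ a ∈ range (n+1), ∑ b ∈ range (n+1),
          coeff a f₁ * coeff b f₂ * coeff n (g^(a+b)) :=
        Finset.sum_product _ _ _
    _ = ∑ a ∈ range (n+1), ∑ b ∈ range (n+1), coeff a f₁ * coeff b f₂ *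
          ∑ p ∈ HasAntidiagonal.antidiagonal n, coeff p.1 (g^a) * coeff p.2 (g^b) := by
        refine Finset.sum_congr rfl fun a _ => Finset.sum_congr rfl fun b _ => ?_
        rw [pow_add, coeff_mul]
    _ = ∑ a ∈ range (n+1), ∑ b ∈ range (n+1), ∑ p ∈ HasAntidiagonal.antidiagonal n,
          coeff a f₁ * coeff b f₂ * (coeff p.1 (g^a) * coeff p.2 (g^b)) := by
        refine Finset.sum_congr rfl fun a _ => Finset.sum_congr rfl fun b _ => ?_
        rw [Finset.mul_sum]
    _ = ∑ a ∈ range (n+1), ∑ p ∈ HasAntidiagonal.antidiagonal n, ∑ b ∈ range (n+1),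
          coeff a f₁ * coeff b f₂ * (coeff p.1 (g^a) * coeff p.2 (g^b)) :=
        Finset.sum_congr rfl fun a _ => Finset.sum_comm
    _ = ∑ p ∈ HasAntidiagonal.antidiagonal n, ∑ a ∈ range (n+1), ∑ b ∈ range (n+1),
          coeff a f₁ * coeff b f₂ * (coeff p.1 (g^a) * coeff p.2 (g^b)) :=
        Finset.sum_comm
    _ = coeff n (pscomp f₁ g * pscomp f₂ g) := by
        rw [coeff_mul]
        refine Finset.sum_congr rfl fun p hp => ?_
        rw [Finset.HasAntidiagonal.mem_antidiagonal] at hp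
        rw [coeff_pscomp_big f₁ g hg (show p.1 < n+1 by omega),
            coeff_pscomp_big f₂ g hg (show p.2 < n+1 by omega),
            Finset.sum_mul_sum]
        refine Finset.sum_congr rfl fun a _ => Finset.sum_congr rfl fun b _ => ?_
        ring

lemma pscomp_pow (f g : PowerSeries ℂ) (hg : constantCoeff g = 0) (k : ℕ) :
    pscomp (f^k) g = (pscomp f g)^k := by
  induction k with
  | zero => simpa using pscomp_one g
  | succ k ih => rw [pow_succ, pscomp_mul _ _ _ hg, ih, pow_succ]

lemma pscomp_X (g : PowerSeries ℂ) (hg : constantCoeff g = 0) :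
    pscomp X g = g := by
  ext n
  rw [coeff_pscomp]
  rcases Nat.eq_zero_or_pos n with rfl | hn
  · simpa using hg.symm
  · rw [Finset.sum_eq_single 1]
    · rw [coeff_X, if_pos rfl, pow_one, one_mul]
    · intro k _ hk
      rw [coeff_X, if_neg hk, zero_mul]
    · intro h
      exfalso
      exact h (Finset.mem_range.2 (by omega))

lemma pscomp_X_right (f : PowerSeries ℂ) : pscomp f X = f := by
  ext n
  rw [coeff_pscomp]
  rw [Finset.sum_eq_single n]
  · rw [coeff_X_pow, if_pos rfl, mul_one]
  · intro k _ hk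
    rw [coeff_X_pow, if_neg (fun hc => hk hc.symm), mul_zero]
  · intro h
    exact absurd (Finset.mem_range.2 (by omega)) h

lemma pscomp_assoc (f u v : PowerSeries ℂ) (hu : constantCoeff u = 0)
    (hv : constantCoeff v = 0) :
    pscomp (pscomp f u) v = pscomp f (pscomp u v) := by
  ext n
  rw [coeff_pscomp, coeff_pscomp]
  calc ∑ k ∈ range (n+1), coeff k (pscomp f u) * coeff n (v^k)
      = ∑ k ∈ range (n+1), ∑ j ∈ range (n+1),
          coeff j f * coeff k (u^j) * coeff n (v^k) := by
        refine Finset.sum_congr rfl fun k hk => ?_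
        rw [mem_range] at hk
        rw [coeff_pscomp_big f u hu (show k < n+1 by omega), Finset.sum_mul]
    _ = ∑ j ∈ range (n+1), coeff j f * coeff n ((pscomp u v)^j) := by
        rw [Finset.sum_comm]
        refine Finset.sum_congr rfl fun j _ => ?_
        rw [← pscomp_pow u v hv j, coeff_pscomp]
        rw [Finset.mul_sum]
        refine Finset.sum_congr rfl fun k _ => ?_
        ring

end PSC


lemma card_NC0 : Fintype.card {s : Setoid (Fin 0) // IsNC s} = 1 := by
  rw [Fintype.card_eq_one_iff]
  refine ⟨⟨⊥, fun a => a.elim0⟩, fun y => Subtype.ext (setoid0_unique _ _)⟩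

lemma Msum_zero (κ : ℕ → ℂ) : Msum κ 0 = 1 := by
  rw [Msum]
  have h1 : ∀ π : {s : Setoid (Fin 0) // IsNC s}, fval κ π.1 = 1 := by
    intro π
    rw [fval]
    have hb : blocksOf π.1 = ∅ := by
      ext B
      simp only [blocksOf, Finset.mem_image, Finset.notMem_empty, iff_false, not_exists]
      intro i
      exact i.elim0
    rw [hb, Finset.prod_empty]
  rw [Finset.sum_congr rfl (fun π _ => h1 π), Finset.sum_const, Finset.card_univ, card_NC0]
  simp

lemma Asum_closed (κ : ℕ → ℂ) (u : PowerSeries ℂ)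
    (hu : u = PowerSeries.X * PowerSeries.mk (Msum κ)) :
    ∀ n j, Asum κ j n =
      ∑ k ∈ Finset.range (n+1), κ (k+j) * PowerSeries.coeff n (u^k) := by
  intro n
  induction n using Nat.strong_induction_on with
  | _ n ih =>
    intro j
    have hu0 : PowerSeries.constantCoeff u = 0 := by rw [hu]; simp
    have hcu : ∀ s : ℕ, PowerSeries.coeff (s+1) u = Msum κ s := by
      intro s
      rw [hu, PowerSeries.coeff_succ_X_mul, PowerSeries.coeff_mk]
    rcases Nat.eq_zero_or_pos n with rfl | hn
    · rw [Asum_zero, Finset.sum_range_one, pow_zero, Nat.zero_add]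
      simp
    · rw [Asum_rec κ j n hn.ne', Finset.sum_range_succ']
      have hF0 : κ (0+j) * PowerSeries.coeff n (u^0) = 0 := by
        rw [pow_zero, PowerSeries.coeff_one, if_neg hn.ne', mul_zero]
      rw [hF0, add_zero]
      have hcoeff : ∀ k' : ℕ, PowerSeries.coeff n (u^(k'+1)) =
          ∑ gg ∈ Finset.range n, Msum κ gg * PowerSeries.coeff (n-1-gg) (u^k') := by
        intro k'
        rw [pow_succ', PowerSeries.coeff_mul,
          Finset.Nat.sum_antidiagonal_eq_sum_range_succ_mk, Finset.sum_range_succ']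
        have h0 : PowerSeries.coeff 0 u = 0 := by
          rw [PowerSeries.coeff_zero_eq_constantCoeff]; exact hu0
        rw [h0, zero_mul, add_zero]
        refine Finset.sum_congr rfl fun i _ => ?_
        rw [hcu i]
        have e : n - (i+1) = n - 1 - i := by omega
        rw [e]
      calc ∑ g ∈ Finset.range n, Msum κ g * Asum κ (j+1) (n - 1 - g)
          = ∑ g ∈ Finset.range n, Msum κ g * ∑ k' ∈ Finset.range n,
              κ (k'+(j+1)) * PowerSeries.coeff (n-1-g) (u^k') := by
            refine Finset.sum_congr rfl fun g hg => ?_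
            rw [Finset.mem_range] at hg
            rw [ih (n-1-g) (by omega) (j+1)]
            congr 1
            refine Finset.sum_subset ?_ ?_
            · intro k hk
              rw [Finset.mem_range] at *
              omega
            · intro k hk hk2
              rw [Finset.mem_range] at hk hk2
              push_neg at hk2
              rw [PSC.coeff_pow_eq_zero hu0 (by omega), mul_zero]
        _ = ∑ g ∈ Finset.range n, ∑ k' ∈ Finset.range n,
              Msum κ g * (κ (k'+(j+1)) * PowerSeries.coeff (n-1-g) (u^k')) :=
            Finset.sum_congr rfl fun g _ => Finset.mul_sum _ _ _
        _ = ∑ k' ∈ Finset.range n, ∑ g ∈ Finset.range n,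
              Msum κ g * (κ (k'+(j+1)) * PowerSeries.coeff (n-1-g) (u^k')) :=
            Finset.sum_comm
        _ = ∑ k' ∈ Finset.range n, κ (k'+1+j) * PowerSeries.coeff n (u^(k'+1)) := by
            refine Finset.sum_congr rfl fun k' _ => ?_
            rw [hcoeff k', Finset.mul_sum]
            refine Finset.sum_congr rfl fun g _ => ?_
            have he : k' + (j+1) = k'+1+j := by omega
            rw [he]
            ring

/-- For `a ∈ A` with free cumulants `κ_n(a)` (defined by the
moment–cumulant relation `φ(aⁿ) = Σ_{π ∈ NC(n)} ∏_{V block of π} κ_{|V|}(a)`), the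
cumulant series `c_a(z) = Σ_{n≥1} κ_n(a) zⁿ` satisfies `1 + c_a(z) = z·K_a(z)`, where
`K_a` is the compositional inverse of the Cauchy transform `G_a`.

`K_a` is encoded by `L(z) = z·K_a(z)` as in the relation `hK` (cf. Statement 0). -/
theorem one_add_cumulant_series_eq
    (A : Type*) [Ring A] [Algebra ℂ A] (φ : A →ₗ[ℂ] ℂ) (hφ1 : φ 1 = 1) (a : A)
    (κ : ℕ → ℂ)
    (hMC : ∀ n : ℕ, φ (a ^ n) = ∑ π : {s : Setoid (Fin n) // IsNC s}, fval κ π.1)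
    (h L : PowerSeries ℂ)
    (hh : h = PowerSeries.mk fun n => φ (a ^ n))
    (hL1 : PowerSeries.constantCoeff L = 1)
    (hK : pscomp (PowerSeries.X * h) (PowerSeries.X * L⁻¹) = PowerSeries.X) :
    1 + phiSeries κ = L := by
  have hC0 : PowerSeries.coeff 0 (1 + phiSeries κ) = 1 := by
    rw [map_add, PowerSeries.coeff_one, if_pos rfl, phiSeries, PowerSeries.coeff_mk,
      if_pos rfl, add_zero]
  have hCk : ∀ k : ℕ, k ≠ 0 → PowerSeries.coeff k (1 + phiSeries κ) = κ k := by
    intro k hk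
    rw [map_add, PowerSeries.coeff_one, if_neg hk, phiSeries, PowerSeries.coeff_mk,
      if_neg hk, zero_add]
  have hhM : h = PowerSeries.mk (Msum κ) := by
    rw [hh]
    ext n
    rw [PowerSeries.coeff_mk, PowerSeries.coeff_mk, hMC n]
    rfl
  have hu0 : PowerSeries.constantCoeff (PowerSeries.X * h) = 0 := by simp
  have hv0 : PowerSeries.constantCoeff (PowerSeries.X * L⁻¹) = 0 := by simp
  have hh0 : PowerSeries.coeff 0 h = 1 := by
    rw [hh, PowerSeries.coeff_mk, pow_zero, hφ1]
  have hA : h = pscomp (1 + phiSeries κ) (PowerSeries.X * h) := by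
    ext n
    rw [PSC.coeff_pscomp]
    rcases Nat.eq_zero_or_pos n with rfl | hn
    · rw [Finset.sum_range_one, pow_zero, hC0, hh0, PowerSeries.coeff_one, if_pos rfl,
        one_mul]
    · have hXh : PowerSeries.X * h = PowerSeries.X * PowerSeries.mk (Msum κ) := by
        rw [hhM]
      have hA0 := Asum_closed κ (PowerSeries.X * h) hXh n 0
      conv_lhs => rw [hhM, PowerSeries.coeff_mk]
      rw [Msum_eq_Asum hn.ne' κ, hA0]
      refine Finset.sum_congr rfl fun k hk => ?_
      rcases Nat.eq_zero_or_pos k with rfl | hk0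
      · rw [pow_zero, PowerSeries.coeff_one, if_neg hn.ne', mul_zero, mul_zero]
      · rw [hCk k hk0.ne', Nat.add_zero]
  have hcomp : pscomp h (PowerSeries.X * L⁻¹) = 1 + phiSeries κ := by
    conv_lhs => rw [hA]
    rw [PSC.pscomp_assoc _ _ _ hu0 hv0, hK, PSC.pscomp_X_right]
  have hXeq : PowerSeries.X =
      (PowerSeries.X * L⁻¹) * (1 + phiSeries κ) := by
    calc PowerSeries.X = pscomp (PowerSeries.X * h) (PowerSeries.X * L⁻¹) := hK.symm
      _ = pscomp PowerSeries.X (PowerSeries.X * L⁻¹) *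
            pscomp h (PowerSeries.X * L⁻¹) := PSC.pscomp_mul _ _ _ hv0
      _ = (PowerSeries.X * L⁻¹) * (1 + phiSeries κ) := by
          rw [PSC.pscomp_X _ hv0, hcomp]
  have hLinv : L * L⁻¹ = 1 := by
    refine PowerSeries.mul_inv_cancel _ ?_
    rw [hL1]
    exact one_ne_zero
  have hcan : PowerSeries.X * (L⁻¹ * (1 + phiSeries κ)) = PowerSeries.X * 1 := by
    rw [mul_one, ← mul_assoc]
    exact hXeq.symm
  have h1 : L⁻¹ * (1 + phiSeries κ) = 1 :=
    mul_left_cancel₀ PowerSeries.X_ne_zero hcan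
  calc 1 + phiSeries κ = (L * L⁻¹) * (1 + phiSeries κ) := by rw [hLinv, one_mul]
    _ = L * (L⁻¹ * (1 + phiSeries κ)) := mul_assoc _ _ _
    _ = L := by rw [h1, mul_one]


end
end

section
/- For any π ∈ NC(n), the Kreweras complement K(π) is the unique non-crossing partition τ of {1',…,n'} such that π ∪ τ is non-crossing on the interleaved set {1,1',2,2',…,n,n'} and (π ∪ τ) ∨ σ = 1_{2n}, where σ is the partition with blocks {k,k'} for 1 ≤ k ≤ n. -/
open scoped Classical
noncomputable section

-- auxiliary development
namespace KrewAux

variable {n : ℕ}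

/-- The explicit Kreweras complement relation. -/
def Krel (p : Setoid (Fin n)) : Setoid (Fin n) where
  r i j := ∀ a b : Fin n, p.r a b → ((a ≤ i ↔ a ≤ j) ↔ (b ≤ i ↔ b ≤ j))
  iseqv := by
    refine ⟨fun i a b _ => by tauto, fun {i j} h a b hab => ?_, fun {i j k} h1 h2 a b hab => ?_⟩
    · have := h a b hab; tauto
    · have := h1 a b hab; have := h2 a b hab; tauto

lemma sat_of_krel {p : Setoid (Fin n)} {i j : Fin n} (hij : i ≤ j)
    (h : (Krel p).r i j) : ∀ a b : Fin n, p.r a b → i < a → a ≤ j → i < b ∧ b ≤ j := by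
  intro a b hab ha1 ha2
  have H := h a b hab
  simp only [Fin.le_def, Fin.lt_def] at *
  omega

lemma krel_of_sat {p : Setoid (Fin n)} {i j : Fin n} (hij : i ≤ j)
    (h : ∀ a b : Fin n, p.r a b → i < a → a ≤ j → i < b ∧ b ≤ j) : (Krel p).r i j := by
  intro a b hab
  have h1 := h a b hab
  have h2 := h b a (p.iseqv.symm hab)
  simp only [Fin.le_def, Fin.lt_def] at *
  omega

def ev (a : Fin n) : Fin (2 * n) := ⟨2 * a.val, by omega⟩
def od (a : Fin n) : Fin (2 * n) := ⟨2 * a.val + 1, by omega⟩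

lemma half_ev (a : Fin n) : half (ev a) = a := Fin.ext (show 2 * a.val / 2 = a.val by omega)
lemma half_od (a : Fin n) : half (od a) = a := Fin.ext (show (2 * a.val + 1) / 2 = a.val by omega)

lemma inter_ev {p t : Setoid (Fin n)} {a b : Fin n} (h : p.r a b) :
    (interleave p t).r (ev a) (ev b) := by
  refine ⟨by simp [ev], fun _ => ?_, fun h1 => absurd h1 (by simp [ev])⟩
  rwa [half_ev, half_ev]

lemma inter_od {p t : Setoid (Fin n)} {a b : Fin n} (h : t.r a b) :
    (interleave p t).r (od a) (od b) := by
  refine ⟨by simp [od], fun h1 => absurd h1 (by simp [od]), fun _ => ?_⟩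
  rwa [half_od, half_od]

lemma not_inter_ev_od {p t : Setoid (Fin n)} {a b : Fin n}
    (h : (interleave p t).r (ev a) (od b)) : False := by
  have := h.1
  simp [ev, od] at this

/-- (A) any compatible `t` is below `Krel p`. -/
lemma le_krel {p t : Setoid (Fin n)} (h : IsNC (interleave p t)) : t ≤ Krel p := by
  have key : ∀ i j : Fin n, t.r i j → i ≤ j → (Krel p).r i j := by
    intro i j hij hle
    refine krel_of_sat hle ?_
    intro a b hab h1 h2
    by_contra hc
    have hcase : b ≤ i ∨ j < b := by
      simp only [Fin.le_def, Fin.lt_def] at *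
      omega
    rcases hcase with hb | hb
    · refine not_inter_ev_od (a := b) (b := i) (h (ev b) (od i) (ev a) (od j) ?_ ?_ ?_ (inter_ev (p.iseqv.symm hab)) (inter_od hij))
      · show ((ev b).val : ℤ) < ((od i).val : ℤ)
        simp only [ev, od, Fin.le_def] at *
        push_cast; omega
      · show ((od i).val : ℤ) < ((ev a).val : ℤ)
        simp only [ev, od, Fin.lt_def] at *
        push_cast; omega
      · show ((ev a).val : ℤ) < ((od j).val : ℤ)
        simp only [ev, od, Fin.le_def] at *
        push_cast; omega
    · have := h (od i) (ev a) (od j) (ev b) ?_ ?_ ?_ (inter_od hij) (inter_ev hab)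
      · exact not_inter_ev_od ((interleave p t).iseqv.symm this)
      · show ((od i).val : ℤ) < ((ev a).val : ℤ)
        simp only [ev, od, Fin.lt_def] at *
        push_cast; omega
      · show ((ev a).val : ℤ) < ((od j).val : ℤ)
        simp only [ev, od, Fin.le_def] at *
        push_cast; omega
      · show ((od j).val : ℤ) < ((ev b).val : ℤ)
        simp only [ev, od, Fin.lt_def] at *
        push_cast; omega
  intro i j hij
  rcases le_total i j with hle | hle
  · exact key i j hij hle
  · exact (Krel p).iseqv.symm (key j i (t.iseqv.symm hij) hle)

/-- (B) `interleave p (Krel p)` is non-crossing. -/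
lemma krel_nc {p : Setoid (Fin n)} (hp : IsNC p) : IsNC (interleave p (Krel p)) := by
  intro x1 x2 x3 x4 h12 h23 h34 h13 h24
  obtain ⟨e13, p13, t13⟩ := h13
  obtain ⟨e24, p24, t24⟩ := h24
  have h12' : x1.val < x2.val := Nat.cast_lt.mp h12
  have h23' : x2.val < x3.val := Nat.cast_lt.mp h23
  have h34' : x3.val < x4.val := Nat.cast_lt.mp h34
  rcases Nat.mod_two_eq_zero_or_one x1.val with e1 | e1 <;>
    rcases Nat.mod_two_eq_zero_or_one x2.val with e2 | e2
  · -- all even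
    have hp13 := p13 e1
    have hp24 := p24 e2
    have := hp (half x1) (half x2) (half x3) (half x4) ?_ ?_ ?_ hp13 hp24
    · exact ⟨by omega, fun _ => this, fun hh => absurd hh (by omega)⟩
    · show ((half x1).val : ℤ) < ((half x2).val : ℤ)
      simp only [half]; push_cast; omega
    · show ((half x2).val : ℤ) < ((half x3).val : ℤ)
      simp only [half]; push_cast; omega
    · show ((half x3).val : ℤ) < ((half x4).val : ℤ)
      simp only [half]; push_cast; omega
  · -- x1 even, x2 odd : crossing p-chord with K-chord, impossible
    have hp13 := p13 e1
    have hK := t24 e2 (half x3) (half x1) (p.iseqv.symm hp13)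
    exfalso
    simp only [Fin.le_def, half] at hK
    omega
  · -- x1 odd, x2 even
    have hp24 := p24 e2
    have hK := t13 e1 (half x2) (half x4) hp24
    exfalso
    simp only [Fin.le_def, half] at hK
    omega
  · -- all odd
    have hK13 := t13 e1
    have hK24 := t24 e2
    refine ⟨by omega, fun hh => absurd hh (by omega), fun _ => ?_⟩
    intro a b hab
    have H1 := hK13 a b hab
    have H2 := hK24 a b hab
    simp only [Fin.le_def, half] at H1 H2 ⊢
    omega


variable {p : Setoid (Fin n)}

lemma conn (hp : IsNC p) :
    ∀ d : ℕ, ∀ i j : Fin n, j.val - i.val ≤ d → i ≤ j →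
    (∀ a b : Fin n, p.r a b → i ≤ a → a ≤ j → i ≤ b ∧ b ≤ j) →
    ∀ x : Fin n, i ≤ x → x ≤ j → (p ⊔ Krel p).r x j := by
  have hP : ∀ {a b : Fin n}, p.r a b → (p ⊔ Krel p).r a b :=
    fun h => Setoid.le_def.mp le_sup_left h
  have hK : ∀ {a b : Fin n}, (Krel p).r a b → (p ⊔ Krel p).r a b :=
    fun h => Setoid.le_def.mp le_sup_right h
  have cast : ∀ {a b : Fin n}, a < b → ((a.val : ℤ) < (b.val : ℤ)) :=
    fun h => Nat.cast_lt.mpr h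
  intro d
  induction d with
  | zero =>
    intro i j hd hij hsat x hx1 hx2
    have : x = j := by
      simp only [Fin.le_def] at *
      exact Fin.ext (by omega)
    exact this ▸ (p ⊔ Krel p).iseqv.refl x
  | succ d ih =>
    intro i j hd hij hsat x hx1 hx2
    classical
    set C := Finset.univ.filter (fun y => p.r i y) with hC
    have hiC : i ∈ C := by simp [hC, p.iseqv.refl]
    have hCne : C.Nonempty := ⟨i, hiC⟩
    obtain ⟨m, hmC, hmmax⟩ : ∃ m, m ∈ C ∧ ∀ y ∈ C, y ≤ m :=
      ⟨C.max' hCne, C.max'_mem hCne, fun y hy => C.le_max' y hy⟩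
    have hpim : p.r i m := by simpa [hC] using hmC
    have hub : ∀ y, p.r i y → y ≤ m := fun y hy => hmmax y (by simp [hC, hy])
    have him : i ≤ m := hub i (p.iseqv.refl i)
    have hmj : m ≤ j := (hsat i m hpim le_rfl hij).2
    have hsat2 : ∀ a b : Fin n, p.r a b → m < a → a ≤ j → m < b ∧ b ≤ j := by
      intro a b hab ha1 ha2
      have hb := hsat a b hab (le_trans him (le_of_lt ha1)) ha2
      refine ⟨?_, hb.2⟩
      by_contra hble
      push_neg at hble
      rcases eq_or_lt_of_le hb.1 with hbi | hbi
      · exact absurd (hub a (hbi ▸ p.iseqv.symm hab)) (not_le.mpr ha1)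
      rcases eq_or_lt_of_le hble with hbm | hbm
      · have : p.r i a := p.iseqv.trans hpim (hbm ▸ p.iseqv.symm hab)
        exact absurd (hub a this) (not_le.mpr ha1)
      · have hiB : p.r i b := hp i b m a (cast hbi) (cast hbm) (cast ha1) hpim (p.iseqv.symm hab)
        have : p.r i a := p.iseqv.trans hiB (p.iseqv.symm hab)
        exact absurd (hub a this) (not_le.mpr ha1)
    have hKmj : (Krel p).r m j := krel_of_sat hmj hsat2
    have hij' : (p ⊔ Krel p).r i j := (p ⊔ Krel p).iseqv.trans (hP hpim) (hK hKmj)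
    by_cases hx : p.r i x
    · exact (p ⊔ Krel p).iseqv.trans ((p ⊔ Krel p).iseqv.symm (hP hx)) hij'
    have hxi : i < x := lt_of_le_of_ne hx1 (fun e => hx (e ▸ p.iseqv.refl i))
    by_cases hxm : m < x
    · -- interval (m, j]
      have hmn : m.val + 1 < n := by
        have h1 : x.val < n := x.isLt
        have := Fin.lt_def.mp hxm
        omega
      refine ih ⟨m.val + 1, hmn⟩ j ?_ ?_ ?_ x ?_ hx2
      · simp only [Fin.le_def, Fin.lt_def] at *; omega
      · simp only [Fin.le_def, Fin.lt_def] at *; omega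
      · intro a b hab h1 h2
        have := hsat2 a b hab (by simp only [Fin.le_def, Fin.lt_def] at *; omega) h2
        refine ⟨?_, this.2⟩
        simp only [Fin.le_def, Fin.lt_def] at *; omega
      · simp only [Fin.le_def, Fin.lt_def] at *; omega
    · -- gap case : i < x ≤ m, x not in class of i
      push_neg at hxm
      have hxm' : x < m := lt_of_le_of_ne hxm (fun e => hx (e ▸ hpim))
      set D := C.filter (fun c => c < x) with hD
      have hDne : D.Nonempty := ⟨i, by simp [hD, hiC, hxi]⟩
      obtain ⟨u, huD, humax⟩ : ∃ u, u ∈ D ∧ ∀ y ∈ D, y ≤ u :=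
        ⟨D.max' hDne, D.max'_mem hDne, fun y hy => D.le_max' y hy⟩
      have hpu : p.r i u := by
        have := huD; simp [hD, hC] at this; exact this.1
      have hux : u < x := by
        have := huD; simp [hD, hC] at this; exact this.2
      set E := C.filter (fun c => x < c) with hE
      have hEne : E.Nonempty := ⟨m, by simp [hE, hC, hpim, hxm']⟩
      obtain ⟨v, hvE, hvmin⟩ : ∃ v, v ∈ E ∧ ∀ y ∈ E, v ≤ y :=
        ⟨E.min' hEne, E.min'_mem hEne, fun y hy => E.min'_le y hy⟩
      have hpv : p.r i v := by
        have := hvE; simp [hE, hC] at this; exact this.1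
      have hxv : x < v := by
        have := hvE; simp [hE, hC] at this; exact this.2
      have hvm : v ≤ m := hvmin m (by simp [hE, hC, hpim, hxm'])
      have hgap : ∀ c : Fin n, p.r i c → u < c → c < v → False := by
        intro c hc h1 h2
        rcases lt_trichotomy c x with h | h | h
        · have hcD : c ∈ D := by simp [hD, hC, hc, h]
          exact absurd (humax c hcD) (not_le.mpr h1)
        · exact hx (h ▸ hc)
        · have hcE : c ∈ E := by simp [hE, hC, hc, h]
          exact absurd (hvmin c hcE) (not_le.mpr h2)
      have hpuv : p.r u v := p.iseqv.trans (p.iseqv.symm hpu) hpv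
      have hsat3 : ∀ a b : Fin n, p.r a b → u < a → a < v → u < b ∧ b < v := by
        intro a b hab h1 h2
        have haC : ¬ p.r i a := fun hia => hgap a hia h1 h2
        by_contra hcon
        push_neg at hcon
        rcases le_or_gt b u with hbu | hbu
        · rcases eq_or_lt_of_le hbu with e | hblt
          · exact haC (p.iseqv.trans hpu (e ▸ p.iseqv.symm hab))
          · have hbu' : p.r b u := hp b u a v (cast hblt) (cast h1) (cast h2) (p.iseqv.symm hab) hpuv
            exact haC (p.iseqv.trans (p.iseqv.trans hpu (p.iseqv.symm hbu'))
              (p.iseqv.symm hab))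
        · have hvb : v ≤ b := hcon hbu
          rcases eq_or_lt_of_le hvb with e | hvlt
          · exact haC (p.iseqv.trans hpv (p.iseqv.symm (e ▸ hab)))
          · have := hp u a v b (cast h1) (cast h2) (cast hvlt) hpuv hab
            exact haC (p.iseqv.trans hpu this)
      have hv1 : 1 ≤ v.val := by
        have := Fin.lt_def.mp hxv; omega
      have hvn : v.val - 1 < n := by have := v.isLt; omega
      have hun : u.val + 1 < n := by
        have := Fin.lt_def.mp hux; have := x.isLt; omega
      have hiu : i ≤ u := humax i (by simp [hD, hiC, hxi])
      have n1 := Fin.lt_def.mp hux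
      have n2 := Fin.lt_def.mp hxv
      have n3 := Fin.le_def.mp hvm
      have n4 := Fin.le_def.mp hmj
      have n5 := Fin.le_def.mp him
      have n6 := Fin.lt_def.mp hxi
      have n7 := Fin.le_def.mp hij
      have n8 := Fin.le_def.mp hiu
      have hxj' : (p ⊔ Krel p).r x ⟨v.val - 1, hvn⟩ := by
        refine ih ⟨u.val + 1, hun⟩ ⟨v.val - 1, hvn⟩ ?_ ?_ ?_ x ?_ ?_
        · show v.val - 1 - (u.val + 1) ≤ d
          omega
        · exact Fin.le_def.mpr (show u.val + 1 ≤ v.val - 1 by omega)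
        · intro a b hab h1 h2
          have h1' : u.val + 1 ≤ a.val := Fin.le_def.mp h1
          have h2' : a.val ≤ v.val - 1 := Fin.le_def.mp h2
          have hf1 : u < a := Fin.lt_def.mpr (by omega)
          have hf2 : a < v := Fin.lt_def.mpr (by omega)
          have hres := hsat3 a b hab hf1 hf2
          have w1 := Fin.lt_def.mp hres.1
          have w2 := Fin.lt_def.mp hres.2
          exact ⟨Fin.le_def.mpr (show u.val + 1 ≤ b.val by omega),
            Fin.le_def.mpr (show b.val ≤ v.val - 1 by omega)⟩
        · exact Fin.le_def.mpr (show u.val + 1 ≤ x.val by omega)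
        · exact Fin.le_def.mpr (show x.val ≤ v.val - 1 by omega)
      have hKuv : (Krel p).r u ⟨v.val - 1, hvn⟩ := by
        refine krel_of_sat (Fin.le_def.mpr (show u.val ≤ v.val - 1 by omega)) ?_
        intro a b hab h1 h2
        have h2' : a.val ≤ v.val - 1 := Fin.le_def.mp h2
        have hf2 : a < v := Fin.lt_def.mpr (by have := Fin.lt_def.mp h1; omega)
        have hres := hsat3 a b hab h1 hf2
        have w2 := Fin.lt_def.mp hres.2
        exact ⟨hres.1, Fin.le_def.mpr (show b.val ≤ v.val - 1 by omega)⟩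
      exact (p ⊔ Krel p).iseqv.trans hxj'
        ((p ⊔ Krel p).iseqv.trans ((p ⊔ Krel p).iseqv.symm (hK hKuv))
          ((p ⊔ Krel p).iseqv.trans ((p ⊔ Krel p).iseqv.symm (hP hpu)) hij'))

lemma sup_krel_top (hp : IsNC p) (hn : 0 < n) : p ⊔ Krel p = ⊤ := by
  rw [Setoid.eq_top_iff]
  intro x y
  have h0 : ∀ z : Fin n, (p ⊔ Krel p).r z ⟨n - 1, by omega⟩ := by
    intro z
    refine conn hp n ⟨0, hn⟩ ⟨n - 1, by omega⟩ (by simp) (by simp [Fin.le_def]) ?_ z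
      (by simp [Fin.le_def]) (by simp [Fin.le_def]; have := z.isLt; omega)
    intro a b _ _ _
    refine ⟨by simp [Fin.le_def], by simp [Fin.le_def]; have := b.isLt; omega⟩
  exact (p ⊔ Krel p).iseqv.trans (h0 x) ((p ⊔ Krel p).iseqv.symm (h0 y))


/-! ### Counting machinery -/

def maxSet (s : Setoid (Fin n)) : Finset (Fin n) :=
  Finset.univ.filter fun i => ∀ j, s.r i j → j ≤ i

lemma mem_maxSet {s : Setoid (Fin n)} {i : Fin n} :
    i ∈ maxSet s ↔ ∀ j, s.r i j → j ≤ i := by simp [maxSet]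

def cls (s : Setoid (Fin n)) (i : Fin n) : Finset (Fin n) :=
  Finset.univ.filter fun y => s.r i y

lemma mem_cls {s : Setoid (Fin n)} {i y : Fin n} : y ∈ cls s i ↔ s.r i y := by simp [cls]

lemma cls_ne (s : Setoid (Fin n)) (i : Fin n) : (cls s i).Nonempty :=
  ⟨i, mem_cls.mpr (s.iseqv.refl i)⟩

def cmax (s : Setoid (Fin n)) (i : Fin n) : Fin n := (cls s i).max' (cls_ne s i)

lemma cmax_rel (s : Setoid (Fin n)) (i : Fin n) : s.r i (cmax s i) :=
  mem_cls.mp ((cls s i).max'_mem (cls_ne s i))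

lemma le_cmax {s : Setoid (Fin n)} {i y : Fin n} (h : s.r i y) : y ≤ cmax s i :=
  (cls s i).le_max' y (mem_cls.mpr h)

lemma cmax_mem_maxSet (s : Setoid (Fin n)) (i : Fin n) : cmax s i ∈ maxSet s :=
  mem_maxSet.mpr fun j hj => le_cmax (s.iseqv.trans (cmax_rel s i) hj)

lemma maxSet_anti {s s' : Setoid (Fin n)} (h : s ≤ s') : maxSet s' ⊆ maxSet s :=
  fun i hi => mem_maxSet.mpr fun j hj => mem_maxSet.mp hi j (Setoid.le_def.mp h hj)

lemma le_of_le_of_maxSet_subset {s s' : Setoid (Fin n)} (hle : s ≤ s')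
    (hsub : maxSet s ⊆ maxSet s') : s' ≤ s := by
  intro a b hab
  have h1 : s.r a (cmax s a) := cmax_rel s a
  have h1' : s.r b (cmax s b) := cmax_rel s b
  have hma : cmax s a ∈ maxSet s' := hsub (cmax_mem_maxSet s a)
  have hmb : cmax s b ∈ maxSet s' := hsub (cmax_mem_maxSet s b)
  have h2 : s'.r (cmax s a) (cmax s b) :=
    s'.iseqv.trans (s'.iseqv.symm (Setoid.le_def.mp hle h1))
      (s'.iseqv.trans hab (Setoid.le_def.mp hle h1'))
  have e : cmax s a = cmax s b :=
    le_antisymm (mem_maxSet.mp hmb _ (s'.iseqv.symm h2)) (mem_maxSet.mp hma _ h2)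
  exact s.iseqv.trans h1 (e ▸ s.iseqv.symm h1')

def pairS (a b : Fin n) : Setoid (Fin n) where
  r x y := x = y ∨ (x = a ∧ y = b) ∨ (x = b ∧ y = a)
  iseqv := by
    refine ⟨fun x => Or.inl rfl, ?_, ?_⟩
    · intro x y h; aesop
    · intro x y z h1 h2; aesop

def Epair (s : Setoid (Fin n)) (a b : Fin n) : Setoid (Fin n) where
  r x y := s.r x y ∨ (s.r x a ∧ s.r b y) ∨ (s.r x b ∧ s.r a y)
  iseqv := by
    refine ⟨fun x => Or.inl (s.iseqv.refl x), ?_, ?_⟩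
    · rintro x y (h | ⟨h1, h2⟩ | ⟨h1, h2⟩)
      · exact Or.inl (s.iseqv.symm h)
      · exact Or.inr (Or.inr ⟨s.iseqv.symm h2, s.iseqv.symm h1⟩)
      · exact Or.inr (Or.inl ⟨s.iseqv.symm h2, s.iseqv.symm h1⟩)
    · rintro x y z (h | ⟨h1, h2⟩ | ⟨h1, h2⟩) (h' | ⟨h1', h2'⟩ | ⟨h1', h2'⟩)
      · exact Or.inl (s.iseqv.trans h h')
      · exact Or.inr (Or.inl ⟨s.iseqv.trans h h1', h2'⟩)
      · exact Or.inr (Or.inr ⟨s.iseqv.trans h h1', h2'⟩)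
      · exact Or.inr (Or.inl ⟨h1, s.iseqv.trans h2 h'⟩)
      · exact Or.inl (s.iseqv.trans h1 (s.iseqv.trans
          (s.iseqv.trans (s.iseqv.symm h1') (s.iseqv.symm h2)) h2'))
      · exact Or.inl (s.iseqv.trans h1 h2')
      · exact Or.inr (Or.inr ⟨h1, s.iseqv.trans h2 h'⟩)
      · exact Or.inl (s.iseqv.trans h1 h2')
      · exact Or.inl (s.iseqv.trans h1 (s.iseqv.trans
          (s.iseqv.symm (s.iseqv.trans h2 h1')) h2'))

lemma sup_pair_eq (s : Setoid (Fin n)) (a b : Fin n) : s ⊔ pairS a b = Epair s a b := by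
  apply le_antisymm
  · apply sup_le
    · intro x y h; exact Or.inl h
    · rintro x y (rfl | ⟨rfl, rfl⟩ | ⟨rfl, rfl⟩)
      · exact Or.inl (s.iseqv.refl x)
      · exact Or.inr (Or.inl ⟨s.iseqv.refl _, s.iseqv.refl _⟩)
      · exact Or.inr (Or.inr ⟨s.iseqv.refl _, s.iseqv.refl _⟩)
  · intro x y h
    have hs : ∀ {u v : Fin n}, s.r u v → (s ⊔ pairS a b).r u v :=
      fun h => Setoid.le_def.mp le_sup_left h
    have hq : ∀ {u v : Fin n}, (pairS a b).r u v → (s ⊔ pairS a b).r u v :=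
      fun h => Setoid.le_def.mp le_sup_right h
    rcases h with h | ⟨h1, h2⟩ | ⟨h1, h2⟩
    · exact hs h
    · exact (s ⊔ pairS a b).iseqv.trans (hs h1)
        ((s ⊔ pairS a b).iseqv.trans (hq (Or.inr (Or.inl ⟨rfl, rfl⟩))) (hs h2))
    · exact (s ⊔ pairS a b).iseqv.trans (hs h1)
        ((s ⊔ pairS a b).iseqv.trans (hq (Or.inr (Or.inr ⟨rfl, rfl⟩))) (hs h2))

lemma card_maxSet_sup_pair (s : Setoid (Fin n)) (a b : Fin n) :
    (maxSet s).card ≤ (maxSet (s ⊔ pairS a b)).card + 1 := by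
  classical
  set w := min (cmax s a) (cmax s b) with hw
  have hsub : maxSet s ⊆ insert w (maxSet (s ⊔ pairS a b)) := by
    intro y hy
    by_cases hwy : y = w
    · exact Finset.mem_insert.mpr (Or.inl hwy)
    refine Finset.mem_insert_of_mem (mem_maxSet.mpr ?_)
    intro j hj
    have hj' : (Epair s a b).r y j := by rw [← sup_pair_eq]; exact hj
    rcases hj' with h | ⟨h1, h2⟩ | ⟨h1, h2⟩
    · exact mem_maxSet.mp hy j h
    · have hya : y = cmax s a :=
        le_antisymm (le_cmax (s.iseqv.symm h1)) (mem_maxSet.mp hy _ (s.iseqv.trans h1 (cmax_rel s a)))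
      have hba : cmax s b ≤ cmax s a := by
        rcases le_total (cmax s a) (cmax s b) with h' | h'
        · exact absurd (hya.trans (min_eq_left h').symm) hwy
        · exact h'
      exact le_trans (le_cmax h2) (hba.trans hya.ge)
    · have hyb : y = cmax s b :=
        le_antisymm (le_cmax (s.iseqv.symm h1)) (mem_maxSet.mp hy _ (s.iseqv.trans h1 (cmax_rel s b)))
      have hab' : cmax s a ≤ cmax s b := by
        rcases le_total (cmax s b) (cmax s a) with h' | h'
        · exact absurd (hyb.trans (min_eq_right h').symm) hwy
        · exact h'
      exact le_trans (le_cmax h2) (hab'.trans hyb.ge)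
  calc (maxSet s).card ≤ (insert w (maxSet (s ⊔ pairS a b))).card := Finset.card_le_card hsub
    _ ≤ (maxSet (s ⊔ pairS a b)).card + 1 := Finset.card_insert_le _ _

def splitS (t : Setoid (Fin n)) (x : Fin n) : Setoid (Fin n) where
  r y z := t.r y z ∧ (y = x ↔ z = x)
  iseqv := ⟨fun y => ⟨t.iseqv.refl y, Iff.rfl⟩,
    fun h => ⟨t.iseqv.symm h.1, h.2.symm⟩,
    fun h h' => ⟨t.iseqv.trans h.1 h'.1, h.2.trans h'.2⟩⟩

lemma splitS_le (t : Setoid (Fin n)) (x : Fin n) : splitS t x ≤ t := fun _ _ h => h.1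

lemma split_sup {t : Setoid (Fin n)} {x b : Fin n} (hxb : t.r x b) (hne : x ≠ b) :
    splitS t x ⊔ pairS x b = t := by
  apply le_antisymm
  · apply sup_le
    · exact splitS_le t x
    · rintro y z (rfl | ⟨rfl, rfl⟩ | ⟨rfl, rfl⟩)
      · exact t.iseqv.refl y
      · exact hxb
      · exact t.iseqv.symm hxb
  · intro y z hyz
    have hs : ∀ {u v : Fin n}, (splitS t x).r u v → (splitS t x ⊔ pairS x b).r u v :=
      fun h => Setoid.le_def.mp le_sup_left h
    have hq : ∀ {u v : Fin n}, (pairS x b).r u v → (splitS t x ⊔ pairS x b).r u v :=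
      fun h => Setoid.le_def.mp le_sup_right h
    by_cases hy : y = x <;> by_cases hz : z = x
    · rw [hy, hz]
    · rw [hy] at hyz ⊢
      exact (splitS t x ⊔ pairS x b).iseqv.trans (hq (Or.inr (Or.inl ⟨rfl, rfl⟩)))
        (hs ⟨t.iseqv.trans (t.iseqv.symm hxb) hyz, iff_of_false (Ne.symm hne) hz⟩)
    · rw [hz] at hyz ⊢
      exact (splitS t x ⊔ pairS x b).iseqv.trans
        (hs ⟨t.iseqv.trans hyz hxb, iff_of_false hy (Ne.symm hne)⟩)
        (hq (Or.inr (Or.inr ⟨rfl, rfl⟩)))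
    · exact hs ⟨hyz, iff_of_false hy hz⟩

lemma card_maxSet_split {t : Setoid (Fin n)} {x b : Fin n} (hxb : t.r x b) (hne : x ≠ b) :
    (maxSet (splitS t x)).card = (maxSet t).card + 1 := by
  classical
  set M := cmax t x with hM
  set D := Finset.univ.filter (fun y => t.r x y ∧ y ≠ x) with hD
  have hDne : D.Nonempty := ⟨b, by simp [hD, hxb, Ne.symm hne]⟩
  set c := D.max' hDne with hc
  have hcD : c ∈ D := D.max'_mem hDne
  have hcx : t.r x c := by have := hcD; simp [hD] at this; exact this.1
  have hcne : c ≠ x := by have := hcD; simp [hD] at this; exact this.2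
  set m' : Fin n := if x = M then c else x with hm'
  have hMsub : maxSet t ⊆ maxSet (splitS t x) := by
    intro y hy
    exact mem_maxSet.mpr fun j hj => mem_maxSet.mp hy j hj.1
  have hm'max : m' ∈ maxSet (splitS t x) := by
    rw [hm']
    split_ifs with hxM
    · refine mem_maxSet.mpr fun j hj => ?_
      obtain ⟨hj1, hj2⟩ := hj
      have hjne : j ≠ x := fun e => hcne (hj2.mpr e)
      have : j ∈ D := by simp [hD, t.iseqv.trans hcx hj1, hjne]
      exact D.le_max' j this
    · refine mem_maxSet.mpr fun j hj => ?_
      have : j = x := hj.2.mp rfl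
      exact this ▸ le_rfl
  have hm'not : m' ∉ maxSet t := by
    rw [hm']
    split_ifs with hxM
    · intro hmem
      have h1 : c ≤ M := le_cmax hcx
      have h2 : x ≤ c := mem_maxSet.mp hmem x (t.iseqv.symm hcx)
      have h1' : c ≤ x := by rw [hxM]; exact h1
      exact hcne (le_antisymm h1' h2)
    · intro hmem
      have h1 : x ≤ M := le_cmax (t.iseqv.refl x)
      have h2 : M ≤ x := mem_maxSet.mp hmem M (cmax_rel t x)
      exact hxM (le_antisymm h1 h2)
  have hsub2 : maxSet (splitS t x) ⊆ insert m' (maxSet t) := by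
    intro y hy
    by_cases hyt : y ∈ maxSet t
    · exact Finset.mem_insert_of_mem hyt
    refine Finset.mem_insert.mpr (Or.inl ?_)
    have hxy : t.r x y := by
      by_contra hxy
      refine hyt (mem_maxSet.mpr fun j hj => ?_)
      have hyx : y ≠ x := fun e => hxy (e ▸ t.iseqv.refl x)
      have hjx : j ≠ x := fun e => hxy (t.iseqv.symm (e ▸ hj))
      exact mem_maxSet.mp hy j ⟨hj, iff_of_false hyx hjx⟩
    by_cases hyx : y = x
    · subst hyx
      have hxM : y ≠ M := by
        intro e
        exact hyt (e ▸ cmax_mem_maxSet t y)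
      rw [hm', if_neg hxM]
    · -- y ∈ class of x, y ≠ x, y is a max of splitS: y = c and x = M
      have hyub : ∀ j ∈ D, j ≤ y := by
        intro j hj
        have hj1 : t.r x j := by have := hj; simp [hD] at this; exact this.1
        have hj2 : j ≠ x := by have := hj; simp [hD] at this; exact this.2
        exact mem_maxSet.mp hy j ⟨t.iseqv.trans (t.iseqv.symm hxy) hj1, iff_of_false hyx hj2⟩
      have hyD : y ∈ D := by simp [hD, hxy, hyx]
      have hyc : y = c := le_antisymm (D.le_max' y hyD) (hyub c hcD)
      have hxM : x = M := by
        by_contra hxM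
        have hMD : M ∈ D := by
          rw [hD]
          simp only [Finset.mem_filter, Finset.mem_univ, true_and]
          exact ⟨cmax_rel t x, fun e => hxM e.symm⟩
        have h1 : M ≤ y := hyub M hMD
        have h2 : y ≤ M := le_cmax hxy
        exact hyt ((le_antisymm h2 h1) ▸ cmax_mem_maxSet t x)
      rw [hm', if_pos hxM, ← hyc]
  have heq : maxSet (splitS t x) = insert m' (maxSet t) := by
    apply le_antisymm hsub2
    intro z hz
    rcases Finset.mem_insert.mp hz with rfl | hz'
    · exact hm'max
    · exact hMsub hz'
  rw [heq, Finset.card_insert_of_notMem hm'not]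

lemma maxSet_eq_univ_iff_bot {t : Setoid (Fin n)} :
    maxSet t = Finset.univ ↔ t = ⊥ := by
  constructor
  · intro h
    apply Setoid.ext
    intro a b
    constructor
    · intro hab
      have ha : a ∈ maxSet t := h ▸ Finset.mem_univ a
      have hb : b ∈ maxSet t := h ▸ Finset.mem_univ b
      exact le_antisymm (mem_maxSet.mp hb a (t.iseqv.symm hab)) (mem_maxSet.mp ha b hab)
    · rintro rfl
      exact t.iseqv.refl a
  · rintro rfl
    refine Finset.eq_univ_iff_forall.mpr fun i => mem_maxSet.mpr fun j hj => ?_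
    exact (show i = j from hj) ▸ le_rfl

lemma L1' : ∀ d : ℕ, ∀ t p : Setoid (Fin n), n - (maxSet t).card ≤ d →
    (maxSet p).card + (maxSet t).card ≤ n + (maxSet (p ⊔ t)).card := by
  have hcard_le : ∀ s : Setoid (Fin n), (maxSet s).card ≤ n := by
    intro s
    calc (maxSet s).card ≤ (Finset.univ : Finset (Fin n)).card :=
          Finset.card_le_card (Finset.subset_univ _)
      _ = n := by simp
  have hbot : ∀ t p : Setoid (Fin n), (maxSet t).card = n →
      (maxSet p).card + (maxSet t).card ≤ n + (maxSet (p ⊔ t)).card := by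
    intro t p hc
    have ht : t = ⊥ := maxSet_eq_univ_iff_bot.mp
      (Finset.eq_of_subset_of_card_le (Finset.subset_univ _) (by simp [hc]))
    subst ht
    rw [sup_bot_eq]
    omega
  intro d
  induction d with
  | zero =>
    intro t p hd
    exact hbot t p (le_antisymm (hcard_le t) (by omega))
  | succ d ih =>
    intro t p hd
    by_cases hc : n ≤ (maxSet t).card
    · exact hbot t p (le_antisymm (hcard_le t) hc)
    push_neg at hc
    have hnb : t ≠ ⊥ := by
      intro e
      rw [← maxSet_eq_univ_iff_bot] at e
      rw [e] at hc
      simp at hc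
    obtain ⟨x, b, hxb, hne⟩ : ∃ x b, t.r x b ∧ x ≠ b := by
      by_contra hno
      push_neg at hno
      exact hnb (Setoid.ext fun a b => ⟨fun h => hno a b h, fun h => h ▸ t.iseqv.refl a⟩)
    have hsplit := card_maxSet_split hxb hne
    have hsup := split_sup hxb hne
    have ihh := ih (splitS t x) (p ⊔ pairS x b) (by omega)
    have heq : (p ⊔ pairS x b) ⊔ splitS t x = p ⊔ t := by
      rw [sup_assoc, sup_comm (pairS x b) (splitS t x), hsup]
    rw [heq] at ihh
    have hlost := card_maxSet_sup_pair p x b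
    omega

lemma card_maxSet_top (hn : 0 < n) : (maxSet (⊤ : Setoid (Fin n))).card = 1 := by
  have : maxSet (⊤ : Setoid (Fin n)) = {⟨n - 1, by omega⟩} := by
    ext i
    rw [mem_maxSet, Finset.mem_singleton]
    constructor
    · intro h
      have h1 := Fin.le_def.mp (h ⟨n - 1, by omega⟩ trivial)
      have h2 := i.isLt
      exact Fin.ext (by simp only [Fin.val_mk] at h1 ⊢; omega)
    · rintro rfl j _
      exact Fin.le_def.mpr (by have := j.isLt; simp only [Fin.val_mk]; omega)
  rw [this, Finset.card_singleton]

lemma sup_top_card (hn : 0 < n) {p t : Setoid (Fin n)} (h : p ⊔ t = ⊤) :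
    (maxSet p).card + (maxSet t).card ≤ n + 1 := by
  have := L1' n t p (by omega)
  rw [h, card_maxSet_top hn] at this
  exact this


/-! ### min/max counting -/

def minSet (s : Setoid (Fin n)) : Finset (Fin n) :=
  Finset.univ.filter fun i => ∀ j, s.r i j → i ≤ j

lemma mem_minSet {s : Setoid (Fin n)} {i : Fin n} :
    i ∈ minSet s ↔ ∀ j, s.r i j → i ≤ j := by simp [minSet]

def cmin (s : Setoid (Fin n)) (i : Fin n) : Fin n := (cls s i).min' (cls_ne s i)

lemma cmin_rel (s : Setoid (Fin n)) (i : Fin n) : s.r i (cmin s i) :=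
  mem_cls.mp ((cls s i).min'_mem (cls_ne s i))

lemma cmin_le {s : Setoid (Fin n)} {i y : Fin n} (h : s.r i y) : cmin s i ≤ y :=
  (cls s i).min'_le y (mem_cls.mpr h)

lemma cmin_mem_minSet (s : Setoid (Fin n)) (i : Fin n) : cmin s i ∈ minSet s :=
  mem_minSet.mpr fun j hj => cmin_le (s.iseqv.trans (cmin_rel s i) hj)

lemma card_minSet_eq (s : Setoid (Fin n)) : (minSet s).card = (maxSet s).card := by
  refine Finset.card_bij (fun a _ => cmax s a) (fun a _ => cmax_mem_maxSet s a) ?_ ?_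
  · intro a1 h1 a2 h2 e
    have e' : cmax s a1 = cmax s a2 := e
    have hr : s.r a1 a2 := s.iseqv.trans (cmax_rel s a1) (e' ▸ s.iseqv.symm (cmax_rel s a2))
    exact le_antisymm (mem_minSet.mp h1 a2 hr) (mem_minSet.mp h2 a1 (s.iseqv.symm hr))
  · intro b hb
    refine ⟨cmin s b, cmin_mem_minSet s b, ?_⟩
    have hrel : s.r b (cmin s b) := cmin_rel s b
    have h1 : b ≤ cmax s (cmin s b) := le_cmax (s.iseqv.symm hrel)
    have h2 : cmax s (cmin s b) ≤ b :=
      mem_maxSet.mp hb _ (s.iseqv.trans hrel (cmax_rel s (cmin s b)))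
    exact le_antisymm h2 h1

/-! ### Counting blocks of the Kreweras complement -/

lemma castlt {a b : Fin n} (h : a < b) : ((a.val : ℤ) < (b.val : ℤ)) := Nat.cast_lt.mpr h

lemma succ_is_min {p : Setoid (Fin n)} {i j : Fin n} (hK : (Krel p).r i j) (hij : i < j)
    (h1 : i.val + 1 < n) :
    ∀ b : Fin n, p.r ⟨i.val + 1, h1⟩ b → (⟨i.val + 1, h1⟩ : Fin n) ≤ b := by
  intro b hb
  have hsat := sat_of_krel (le_of_lt hij) hK ⟨i.val + 1, h1⟩ b hb
    (Fin.lt_def.mpr (by simp)) (Fin.le_def.mpr (by have := Fin.lt_def.mp hij; simp; omega))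
  exact Fin.le_def.mpr (by have := Fin.lt_def.mp hsat.1; simp; omega)

lemma not_max_of_succ_min {p : Setoid (Fin n)} (hp : IsNC p) {i : Fin n} (h1 : i.val + 1 < n)
    (hmin : ∀ b : Fin n, p.r ⟨i.val + 1, h1⟩ b → (⟨i.val + 1, h1⟩ : Fin n) ≤ b) :
    ∃ j, (Krel p).r i j ∧ i < j := by
  set s : Fin n := ⟨i.val + 1, h1⟩ with hs
  have hsj : s ≤ cmax p s := le_cmax (p.iseqv.refl s)
  set j := cmax p s with hj
  have his : i < s := Fin.lt_def.mpr (by simp [hs])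
  have hij : i < j := lt_of_lt_of_le his hsj
  refine ⟨j, krel_of_sat (le_of_lt hij) ?_, hij⟩
  intro a b hab ha1 ha2
  by_cases hsa : p.r s a
  · have hb : p.r s b := p.iseqv.trans hsa hab
    exact ⟨lt_of_lt_of_le his (hmin b hb), le_cmax hb⟩
  · have hsa' : s < a := by
      have h' : s ≤ a := Fin.le_def.mpr (by
        have := Fin.lt_def.mp ha1; simp [hs]; omega)
      exact lt_of_le_of_ne h' (fun e => hsa (e ▸ p.iseqv.refl s))
    have haj : a < j := lt_of_le_of_ne ha2 (fun e => hsa (by rw [e]; exact cmax_rel p s))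
    by_contra hc
    have hcase : b < s ∨ j < b := by
      have w1 := Fin.lt_def.mp his
      have w2 := Fin.le_def.mp hsj
      simp only [Fin.lt_def, Fin.le_def, hs] at *
      omega
    rcases hcase with hb | hb
    · have hres : p.r b s := hp b s a j (castlt hb) (castlt hsa') (castlt haj)
        (p.iseqv.symm hab) (cmax_rel p s)
      exact absurd (hmin b (p.iseqv.symm hres)) (not_le.mpr hb)
    · have hres : p.r s a := hp s a j b (castlt hsa') (castlt haj) (castlt hb)
        (cmax_rel p s) hab
      exact hsa hres

lemma krel_card {p : Setoid (Fin n)} (hp : IsNC p) (hn : 0 < n) :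
    (maxSet (Krel p)).card + (minSet p).card = n + 1 := by
  classical
  have h0min : (⟨0, hn⟩ : Fin n) ∈ minSet p :=
    mem_minSet.mpr fun j _ => Fin.le_def.mpr (by simp)
  have hexof : ∀ a : Fin n, a ∈ Finset.univ \ maxSet (Krel p) →
      ∃ j, (Krel p).r a j ∧ a < j := by
    intro a ha
    have h2 := (Finset.mem_sdiff.mp ha).2
    rw [mem_maxSet] at h2
    push_neg at h2
    obtain ⟨j, hj1, hj2⟩ := h2
    exact ⟨j, hj1, hj2⟩
  have hltn : ∀ a : Fin n, (∃ j, (Krel p).r a j ∧ a < j) → a.val + 1 < n := by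
    intro a ⟨j, _, hj⟩
    have := Fin.lt_def.mp hj
    have := j.isLt
    omega
  have hbij : (Finset.univ \ maxSet (Krel p)).card = ((minSet p).erase ⟨0, hn⟩).card := by
    refine Finset.card_bij
      (fun a ha => (⟨a.val + 1, hltn a (hexof a ha)⟩ : Fin n)) ?_ ?_ ?_
    · intro a ha
      obtain ⟨j, hK, hlt⟩ := hexof a ha
      have hmin := succ_is_min hK hlt (hltn a (hexof a ha))
      refine Finset.mem_erase.mpr ⟨?_, mem_minSet.mpr hmin⟩
      intro e
      have := congrArg Fin.val e
      simp at this
    · intro a1 h1 a2 h2 e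
      have := congrArg Fin.val e
      simp at this
      exact Fin.ext this
    · intro b hb
      obtain ⟨hb0, hbmin⟩ := Finset.mem_erase.mp hb
      have hb1 : 1 ≤ b.val := by
        rcases Nat.eq_zero_or_pos b.val with e | h'
        · exact absurd (Fin.ext (by simp [e])) hb0
        · exact h'
      have hbn : b.val - 1 + 1 < n := by have := b.isLt; omega
      set a : Fin n := ⟨b.val - 1, by omega⟩ with ha
      have hab : (⟨a.val + 1, hbn⟩ : Fin n) = b := Fin.ext (by simp [ha]; omega)
      have hmin' : ∀ c : Fin n, p.r ⟨a.val + 1, hbn⟩ c → (⟨a.val + 1, hbn⟩ : Fin n) ≤ c := by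
        rw [hab]
        exact fun c hc => mem_minSet.mp hbmin c hc
      obtain ⟨j, hK, hlt⟩ := not_max_of_succ_min hp hbn hmin'
      have hamem : a ∈ Finset.univ \ maxSet (Krel p) := by
        refine Finset.mem_sdiff.mpr ⟨Finset.mem_univ a, ?_⟩
        intro hmax
        exact absurd (mem_maxSet.mp hmax j hK) (not_le.mpr hlt)
      exact ⟨a, hamem, Fin.ext (by simp [ha]; omega)⟩
  have h1 : (Finset.univ \ maxSet (Krel p)).card = n - (maxSet (Krel p)).card := by
    rw [Finset.card_sdiff_of_subset (Finset.subset_univ _)]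
    simp
  have h2 : ((minSet p).erase ⟨0, hn⟩).card = (minSet p).card - 1 :=
    Finset.card_erase_of_mem h0min
  have h3 : (maxSet (Krel p)).card ≤ n := by
    calc (maxSet (Krel p)).card ≤ (Finset.univ : Finset (Fin n)).card :=
          Finset.card_le_card (Finset.subset_univ _)
      _ = n := by simp
  have h4 : 1 ≤ (minSet p).card := Finset.card_pos.mpr ⟨_, h0min⟩
  omega

/-! ### Uniqueness -/

lemma eq_krel {p t : Setoid (Fin n)} (hp : IsNC p) (hn : 0 < n)
    (hNC : IsNC (interleave p t)) (hjoin : p ⊔ t = ⊤) : t = Krel p := by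
  have hle : t ≤ Krel p := le_krel hNC
  have hL1 := sup_top_card hn hjoin
  have hE := krel_card hp hn
  have hmm : (minSet p).card = (maxSet p).card := card_minSet_eq p
  have hsub : maxSet (Krel p) ⊆ maxSet t := maxSet_anti hle
  have hsub_card : (maxSet (Krel p)).card ≤ (maxSet t).card := Finset.card_le_card hsub
  have hcard : (maxSet t).card ≤ (maxSet (Krel p)).card := by omega
  have heq : maxSet (Krel p) = maxSet t := Finset.eq_of_subset_of_card_le hsub hcard
  have hge : Krel p ≤ t := le_of_le_of_maxSet_subset hle (by rw [heq])
  exact le_antisymm hle hge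

lemma kreweras_eq_krel {p : Setoid (Fin n)} (hp : IsNC p) : kreweras p = Krel p := by
  apply le_antisymm
  · exact sSup_le fun t ht => le_krel ht
  · exact le_sSup (krel_nc hp)

/-! ### Transfer of the join condition -/

lemma join_transfer {p t : Setoid (Fin n)} :
    interleave p t ⊔ Setoid.ker (half (n := n)) = ⊤ ↔ p ⊔ t = ⊤ := by
  constructor
  · intro h
    rw [Setoid.eq_top_iff]
    intro i j
    have hS : interleave p t ⊔ Setoid.ker (half (n := n)) ≤ Setoid.comap half (p ⊔ t) := by
      apply sup_le
      · intro x y hxy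
        obtain ⟨he, h0, h1⟩ := hxy
        show (p ⊔ t).r (half x) (half y)
        rcases Nat.mod_two_eq_zero_or_one x.val with e | e
        · exact Setoid.le_def.mp le_sup_left (h0 e)
        · exact Setoid.le_def.mp le_sup_right (h1 e)
      · intro x y hxy
        show (p ⊔ t).r (half x) (half y)
        rw [show half x = half y from hxy]
    have htop : (interleave p t ⊔ Setoid.ker (half (n := n))).r (ev i) (ev j) := by
      rw [h]
      exact trivial
    have hcomap := Setoid.le_def.mp hS htop
    have hres : (p ⊔ t).r (half (ev i)) (half (ev j)) := hcomap
    rwa [half_ev, half_ev] at hres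
  · intro h
    rw [Setoid.eq_top_iff]
    intro x y
    have hker : ∀ {u v : Fin (2 * n)}, half u = half v →
        (interleave p t ⊔ Setoid.ker (half (n := n))).r u v :=
      fun h' => Setoid.le_def.mp le_sup_right h'
    have hint : ∀ {u v : Fin (2 * n)}, (interleave p t).r u v →
        (interleave p t ⊔ Setoid.ker (half (n := n))).r u v :=
      fun h' => Setoid.le_def.mp le_sup_left h'
    set J := interleave p t ⊔ Setoid.ker (half (n := n)) with hJ
    have key : ∀ i j : Fin n, (p ⊔ t).r i j → J.r (ev i) (ev j) := by
      intro i j hij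
      have hij' : Relation.EqvGen (fun a b => p.r a b ∨ t.r a b) i j := by
        rw [Setoid.sup_eq_eqvGen] at hij
        exact hij
      clear hij
      induction hij' with
      | rel a b hab =>
        rcases hab with hab | hab
        · exact hint (inter_ev hab)
        · exact J.iseqv.trans (hker (by rw [half_ev, half_od]))
            (J.iseqv.trans (hint (inter_od hab)) (hker (by rw [half_od, half_ev])))
      | refl a => exact J.iseqv.refl _
      | symm a b _ ih => exact J.iseqv.symm ih
      | trans a b c _ _ ih1 ih2 => exact J.iseqv.trans ih1 ih2
    have h1 : J.r x (ev (half x)) := hker (half_ev (half x)).symm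
    have h2 : J.r y (ev (half y)) := hker (half_ev (half y)).symm
    have h3 : (p ⊔ t).r (half x) (half y) := by
      rw [h]
      exact trivial
    exact J.iseqv.trans h1 (J.iseqv.trans (key _ _ h3) (J.iseqv.symm h2))

end KrewAux

open KrewAux in
/-- For any `π ∈ NC(n)`, the Kreweras complement `K(π)` is the unique
partition `τ` of the primed points `{1',…,n'}` such that `π ∪ τ` is non-crossing on the
interleaved set `{1,1',2,2',…,n,n'}` and `(π ∪ τ) ∨ σ = 1_{2n}`, where `σ` is the
partition with blocks `{k, k'}` for `1 ≤ k ≤ n` (here `σ = Setoid.ker half`, the join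
`⊔` is taken in the lattice of all partitions of the `2n` points, and `⊤ = 1_{2n}`). -/
theorem kreweras_unique_characterization (n : ℕ) (p : Setoid (Fin n)) (hp : IsNC p)
    (t : Setoid (Fin n)) :
    (IsNC (interleave p t) ∧ interleave p t ⊔ Setoid.ker (half (n := n)) = ⊤) ↔
      t = kreweras p := by
  rcases Nat.eq_zero_or_pos n with rfl | hn
  · have hss : ∀ s1 s2 : Setoid (Fin 0), s1 = s2 := fun s1 s2 => Setoid.ext fun a => a.elim0
    have hss2 : ∀ s1 s2 : Setoid (Fin (2 * 0)), s1 = s2 := fun s1 s2 =>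
      Setoid.ext fun a => a.elim0
    constructor
    · intro _
      exact hss t (kreweras p)
    · intro _
      exact ⟨fun a _ _ _ _ _ _ _ _ => a.elim0, hss2 _ _⟩
  · constructor
    · rintro ⟨hNC, hjoin⟩
      have hjoin' : p ⊔ t = ⊤ := join_transfer.mp hjoin
      exact (eq_krel hp hn hNC hjoin').trans (kreweras_eq_krel hp).symm
    · rintro rfl
      rw [kreweras_eq_krel hp]
      exact ⟨krel_nc hp, join_transfer.mpr (sup_krel_top hp hn)⟩


end
end
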